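/- arXiv:2401.10147 — 3 statements merged into one kernel-verified Lean document; each statement's English description precedes it below -/
import Mathlib

section
/- Let 𝒮 be a family of finite subsets of a set V and let c, u: 𝒮 → [0,∞) be such that for every Z ∈ 𝒮: Σ_{X∈𝒮} χ(Z,X) u(X) e^{c(X)} ≤ c(Z). Then for every Z ∈ 𝒮 the following two inequalities hold: (1) Σ_{k≥1} Σ_{[X₁,…,X_k]∈𝕊_k} χ(Z, X₁, …, X_k) ∏_{j=1}^k u(X_j) ≤ e^{c(Z)} − 1, where 𝕊_k is the set of all k-element multisets of elements of 𝒮; and (2) Σ_{k≥1} Σ_{[X₁,…,X_k]∈ℙ_k} χ(Z, X₁, …, X_k) ∏_{j=1}^k u(X_j) ≤ c(Z), where ℙ_k ⊆ 𝕊_k is the subset of connected multisets. -/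
set_option linter.unusedVariables false
set_option linter.unusedSectionVars false

open scoped BigOperators ENNReal Matrix.Norms.L2Operator

noncomputable section

/-- A multiset `γ = [X₁,…,X_k]` of finite subsets is *connected* if it cannot be split
into two nonempty mutually disjoint parts (equivalently, the graph on its indices with an
edge `{i,j}` whenever `X_i ∩ X_j ≠ ∅` is connected). -/
def MConn {W : Type*} (γ : Multiset (Finset W)) : Prop :=
  ∀ γ₁ γ₂ : Multiset (Finset W), γ = γ₁ + γ₂ → γ₁ ≠ 0 → γ₂ ≠ 0 →
    ∃ X ∈ γ₁, ∃ Y ∈ γ₂, ¬Disjoint X Y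

open Classical in
/-- `χ(Z, X₁, …, X_k)`: the indicator that the multiset `[Z, X₁, …, X_k]` is connected. -/
noncomputable def mchi {W : Type*} (Z : Finset W) (γ : Multiset (Finset W)) : ℝ≥0∞ :=
  if MConn (Z ::ₘ γ) then 1 else 0


open scoped Classical

namespace MCL


variable {W : Type*}

lemma mconn_zero : MConn (0 : Multiset (Finset W)) := by
  intro γ₁ γ₂ h h1 _
  exact absurd (add_eq_zero.mp h.symm).1 h1

lemma mconn_singleton (X : Finset W) : MConn ({X} : Multiset (Finset W)) := by
  intro γ₁ γ₂ h h1 h2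
  have hc := congrArg Multiset.card h
  simp only [Multiset.card_singleton, Multiset.card_add] at hc
  have c1 : 1 ≤ Multiset.card γ₁ := Multiset.card_pos.2 h1
  have c2 : 1 ≤ Multiset.card γ₂ := Multiset.card_pos.2 h2
  omega

lemma mconn_cons_of {Z : Finset W} {δ : Multiset (Finset W)} (hδ : MConn δ)
    (h : ∃ B ∈ δ, ¬Disjoint Z B) : MConn (Z ::ₘ δ) := by
  intro γ₁ γ₂ heq h1 h2
  have hZ : Z ∈ γ₁ + γ₂ := by rw [← heq]; exact Multiset.mem_cons_self _ _
  rw [Multiset.mem_add] at hZ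
  rcases hZ with hZ1 | hZ2
  · by_cases hγ1 : γ₁.erase Z = 0
    · have hγ1' : γ₁ = {Z} := by
        have := Multiset.cons_erase hZ1
        rw [hγ1] at this
        simpa using this.symm
      have hδeq : δ = γ₂ := by
        apply (Multiset.cons_inj_right Z).mp
        rw [heq, hγ1', Multiset.singleton_add]
      obtain ⟨B, hB, hBd⟩ := h
      exact ⟨Z, by simp [hγ1'], B, hδeq ▸ hB, hBd⟩
    · have hδeq : δ = γ₁.erase Z + γ₂ := by
        apply (Multiset.cons_inj_right Z).mp
        rw [heq, ← Multiset.cons_add, Multiset.cons_erase hZ1]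
      obtain ⟨A, hA, B, hB, hd⟩ := hδ _ _ hδeq hγ1 h2
      exact ⟨A, Multiset.mem_of_mem_erase hA, B, hB, hd⟩
  · by_cases hγ2 : γ₂.erase Z = 0
    · have hγ2' : γ₂ = {Z} := by
        have := Multiset.cons_erase hZ2
        rw [hγ2] at this
        simpa using this.symm
      have hδeq : δ = γ₁ := by
        apply (Multiset.cons_inj_right Z).mp
        rw [heq, hγ2', add_comm, Multiset.singleton_add]
      obtain ⟨B, hB, hBd⟩ := h
      exact ⟨B, hδeq ▸ hB, Z, by simp [hγ2'], fun hd => hBd hd.symm⟩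
    · have hδeq : δ = γ₁ + γ₂.erase Z := by
        apply (Multiset.cons_inj_right Z).mp
        rw [heq, add_comm γ₁ (γ₂.erase Z), ← Multiset.cons_add,
          Multiset.cons_erase hZ2, add_comm]
      obtain ⟨A, hA, B, hB, hd⟩ := hδ _ _ hδeq h1 hγ2
      exact ⟨A, hA, B, Multiset.mem_of_mem_erase hB, hd⟩

lemma exists_hit {Z : Finset W} {γ : Multiset (Finset W)} (h : MConn (Z ::ₘ γ))
    (hγ : γ ≠ 0) : ∃ X ∈ γ, ¬Disjoint Z X := by
  obtain ⟨A, hA, B, hB, hd⟩ := h {Z} γ (Multiset.singleton_add Z γ).symm (by simp) hγ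
  rw [Multiset.mem_singleton] at hA
  exact ⟨B, hB, hA ▸ hd⟩

lemma mconn_pair {Z X : Finset W} :
    MConn (Z ::ₘ ({X} : Multiset (Finset W))) ↔ ¬Disjoint Z X := by
  constructor
  · intro h
    obtain ⟨Y, hY, hd⟩ := exists_hit h (by simp)
    rw [Multiset.mem_singleton] at hY
    exact hY ▸ hd
  · intro h
    exact mconn_cons_of (mconn_singleton X) ⟨X, Multiset.mem_singleton_self X, h⟩

lemma ne_empty_of_mem {Z : Finset W} {γ : Multiset (Finset W)} (h : MConn (Z ::ₘ γ))
    {X : Finset W} (hX : X ∈ γ) : X ≠ ∅ := by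
  intro hXe
  subst hXe
  have heq : Z ::ₘ γ = (Z ::ₘ γ.erase ∅) + {∅} := by
    rw [add_comm, Multiset.singleton_add, Multiset.cons_swap, Multiset.cons_erase hX]
  obtain ⟨A, _, B, hB, hd⟩ := h _ _ heq (by simp) (by simp)
  rw [Multiset.mem_singleton] at hB
  subst hB
  exact hd (Finset.disjoint_empty_right A)


variable {W : Type*}

/-- `δ` is a *clean part* of `γ`: a submultiset whose members are disjoint from every
member of the rest. -/
def Clean (γ δ : Multiset (Finset W)) : Prop :=
  δ ≤ γ ∧ ∀ X ∈ δ, ∀ Y ∈ γ - δ, Disjoint X Y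

/-- The connected components of a multiset of finsets. -/
noncomputable def comps (γ : Multiset (Finset W)) : Finset (Multiset (Finset W)) :=
  γ.powerset.toFinset.filter (fun δ => δ ≠ 0 ∧ Clean γ δ ∧ MConn δ)

lemma mem_comps {γ δ : Multiset (Finset W)} :
    δ ∈ comps γ ↔ δ ≠ 0 ∧ Clean γ δ ∧ MConn δ := by
  unfold comps
  simp only [Finset.mem_filter, Multiset.mem_toFinset, Multiset.mem_powerset]
  exact ⟨fun h => h.2, fun h => ⟨h.2.1.1, h⟩⟩

lemma comps_nonempty {γ : Multiset (Finset W)} (hγ : γ ≠ 0) : ∃ δ, δ ∈ comps γ := by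
  -- take a minimal-cardinality nonzero clean part
  have hex : ∃ n, ∃ δ : Multiset (Finset W), (δ ≠ 0 ∧ Clean γ δ) ∧ Multiset.card δ = n :=
    ⟨Multiset.card γ, γ, ⟨hγ, le_refl γ, by simp [Multiset.mem_sub]⟩, rfl⟩
  classical
  obtain ⟨δ₀, ⟨h0, hcl⟩, hcard⟩ := Nat.find_spec hex
  refine ⟨δ₀, mem_comps.2 ⟨h0, hcl, ?_⟩⟩
  intro γ₁ γ₂ hsplit hg1 hg2
  by_contra hno
  push_neg at hno
  -- γ₁ is a smaller nonzero clean part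
  have hle : γ₁ ≤ γ := le_trans (hsplit ▸ le_add_right (le_refl γ₁) : γ₁ ≤ δ₀) hcl.1
  have hsub : γ - γ₁ = (γ - δ₀) + γ₂ := by
    ext a
    have h1 : Multiset.count a δ₀ = Multiset.count a γ₁ + Multiset.count a γ₂ := by
      rw [hsplit, Multiset.count_add]
    have h2 : Multiset.count a δ₀ ≤ Multiset.count a γ :=
      Multiset.le_iff_count.1 hcl.1 a
    simp only [Multiset.count_sub, Multiset.count_add]
    omega
  have hclean1 : Clean γ γ₁ := by
    refine ⟨hle, fun X hX Y hY => ?_⟩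
    rw [hsub, Multiset.mem_add] at hY
    rcases hY with hY | hY
    · exact hcl.2 X (by rw [hsplit]; exact Multiset.mem_add.2 (Or.inl hX)) Y hY
    · exact hno X hX Y hY
  have hlt : Multiset.card γ₁ < Multiset.card δ₀ := by
    have := congrArg Multiset.card hsplit
    simp only [Multiset.card_add] at this
    have : Multiset.card δ₀ = Multiset.card γ₁ + Multiset.card γ₂ := this
    have h2 : 0 < Multiset.card γ₂ := Multiset.card_pos.2 hg2
    omega
  rw [hcard] at hlt
  exact Nat.find_min hex hlt ⟨γ₁, ⟨hg1, hclean1⟩, rfl⟩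

lemma le_of_clean_inter {γ δ δ₀ : Multiset (Finset W)} {X : Finset W}
    (hδγ : δ ≤ γ) (h0 : Clean γ δ₀) (hM : MConn δ) (hX : X ∈ δ) (hX0 : X ∈ δ₀) :
    δ ≤ δ₀ := by
  classical
  set δ₁ := δ ∩ δ₀ with hδ₁
  set δ₂ := δ - δ₁ with hδ₂
  have hsum : δ = δ₁ + δ₂ := (add_tsub_cancel_of_le inf_le_left).symm
  by_cases h2 : δ₂ = 0
  · have : δ ≤ δ₁ := by rw [hsum, h2, add_zero]
    exact le_trans this inf_le_right
  · have h1 : δ₁ ≠ 0 := by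
      intro h
      have : X ∈ δ₁ := Multiset.mem_inter.2 ⟨hX, hX0⟩
      simp [h] at this
    obtain ⟨A, hA, B, hB, hd⟩ := hM _ _ hsum h1 h2
    have hA0 : A ∈ δ₀ := (Multiset.mem_inter.1 hA).2
    have hB0 : B ∈ γ - δ₀ := by
      rw [← Multiset.count_pos]
      have hBδ : 0 < Multiset.count B δ₂ := Multiset.count_pos.2 hB
      have hc1 : Multiset.count B δ₂ = Multiset.count B δ - min (Multiset.count B δ) (Multiset.count B δ₀) := by
        simp [hδ₂, hδ₁, Multiset.count_sub, Multiset.count_inter]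
      have hc2 : Multiset.count B δ ≤ Multiset.count B γ := Multiset.le_iff_count.1 hδγ B
      rw [Multiset.count_sub]
      omega
    exact absurd (h0.2 A hA0 B hB0) hd

lemma comps_disj {γ δ δ' : Multiset (Finset W)} (h : δ ∈ comps γ) (h' : δ' ∈ comps γ)
    {X : Finset W} (hX : X ∈ δ) (hX' : X ∈ δ') : δ = δ' := by
  rw [mem_comps] at h h'
  exact le_antisymm (le_of_clean_inter h.2.1.1 h'.2.1 h.2.2 hX hX')
    (le_of_clean_inter h'.2.1.1 h.2.1 h'.2.2 hX' hX)

lemma comps_sum : ∀ n (γ : Multiset (Finset W)), Multiset.card γ = n →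
    (∀ X ∈ γ, X ≠ ∅) → ∑ δ ∈ comps γ, δ = γ := by
  intro n
  induction n using Nat.strong_induction_on with
  | _ n ih =>
    intro γ hn hne
    by_cases hγ : γ = 0
    · subst hγ
      have : comps (0 : Multiset (Finset W)) = ∅ := by
        apply Finset.eq_empty_of_forall_notMem
        intro δ hδ
        rw [mem_comps] at hδ
        exact hδ.1 (Multiset.le_zero.1 hδ.2.1.1)
      simp [this]
    · obtain ⟨δ₀, hδ₀⟩ := comps_nonempty hγ
      have hδ₀' := mem_comps.1 hδ₀
      set γ' := γ - δ₀ with hγ'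
      have hle : δ₀ ≤ γ := hδ₀'.2.1.1
      -- comps γ = insert δ₀ (comps γ')
      have hins : comps γ = insert δ₀ (comps γ') := by
        apply Finset.ext
        intro δ
        simp only [Finset.mem_insert]
        constructor
        · intro hδ
          by_cases heq : δ = δ₀
          · exact Or.inl heq
          · right
            have hδ' := mem_comps.1 hδ
            -- δ and δ₀ share no element
            have hshare : ∀ X, X ∈ δ → X ∉ δ₀ := fun X h1 h2 =>
              heq (comps_disj hδ hδ₀ h1 h2)
            have hledef : δ ≤ γ' := by
              rw [Multiset.le_iff_count]
              intro a
              by_cases ha : a ∈ δ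
              · have ha0 : Multiset.count a δ₀ = 0 :=
                  Multiset.count_eq_zero.2 (hshare a ha)
                rw [hγ', Multiset.count_sub, ha0]
                exact le_trans (Multiset.le_iff_count.1 hδ'.2.1.1 a) (by omega)
              · simp [Multiset.count_eq_zero.2 ha]
            refine mem_comps.2 ⟨hδ'.1, ⟨hledef, fun X hX Y hY => ?_⟩, hδ'.2.2⟩
            have : Y ∈ γ - δ := by
              rw [← Multiset.count_pos] at hY ⊢
              rw [Multiset.count_sub] at hY ⊢
              rw [hγ', Multiset.count_sub] at hY
              have := Multiset.le_iff_count.1 hle Y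
              omega
            exact hδ'.2.1.2 X hX Y this
        · intro hδ
          rcases hδ with hδ | hδ
          · exact hδ ▸ hδ₀
          · have hδ' := mem_comps.1 hδ
            have hleγ : δ ≤ γ := le_trans hδ'.2.1.1 (Multiset.sub_le_self γ δ₀)
            refine mem_comps.2 ⟨hδ'.1, ⟨hleγ, fun X hX Y hY => ?_⟩, hδ'.2.2⟩
            -- γ - δ = δ₀ + (γ' - δ)
            have hsplit : γ - δ = δ₀ + (γ' - δ) := by
              ext a
              simp only [Multiset.count_sub, Multiset.count_add, hγ']
              have h1 := Multiset.le_iff_count.1 hle a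
              have h2 := Multiset.le_iff_count.1 hδ'.2.1.1 a
              rw [Multiset.count_sub] at h2
              omega
            rw [hsplit, Multiset.mem_add] at hY
            rcases hY with hY | hY
            · have hXγ' : X ∈ γ - δ₀ := Multiset.mem_of_le hδ'.2.1.1 hX
              exact (hδ₀'.2.1.2 Y hY X hXγ').symm
            · exact hδ'.2.1.2 X hX Y hY
      have hnotmem : δ₀ ∉ comps γ' := by
        intro hmem
        have hle' : δ₀ ≤ γ' := (mem_comps.1 hmem).2.1.1
        obtain ⟨X, hX⟩ := Multiset.exists_mem_of_ne_zero hδ₀'.1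
        have hXγ' : X ∈ γ - δ₀ := Multiset.mem_of_le hle' hX
        have := hδ₀'.2.1.2 X hX X hXγ'
        rw [disjoint_self] at this
        exact hne X (Multiset.mem_of_le hle hX) (by simpa using this)
      have hcard : Multiset.card γ' < n := by
        rw [← hn, hγ', Multiset.card_sub hle]
        have h0 : 0 < Multiset.card δ₀ := Multiset.card_pos.2 hδ₀'.1
        have := Multiset.card_le_card hle
        omega
      have hih := ih _ hcard γ' rfl (fun X hX => hne X (Multiset.mem_of_le (Multiset.sub_le_self γ δ₀) hX))
      rw [hins, Finset.sum_insert hnotmem, hih, hγ', add_tsub_cancel_of_le hle]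

lemma comps_card_le {γ δ : Multiset (Finset W)} (h : δ ∈ comps γ) :
    Multiset.card δ ≤ Multiset.card γ :=
  Multiset.card_le_card (mem_comps.1 h).2.1.1

lemma comps_hit' {Z : Finset W} {γ δ : Multiset (Finset W)} (hZ : MConn (Z ::ₘ γ))
    (h : δ ∈ comps γ) : ∃ B ∈ δ, ¬Disjoint Z B := by
  have h' := mem_comps.1 h
  have hle : δ ≤ γ := h'.2.1.1
  have hsplit : Z ::ₘ γ = (Z ::ₘ (γ - δ)) + δ := by
    rw [Multiset.cons_add, tsub_add_cancel_of_le hle]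
  obtain ⟨A, hA, B, hB, hd⟩ := hZ _ _ hsplit (by simp) h'.1
  rw [Multiset.mem_cons] at hA
  rcases hA with rfl | hA
  · exact ⟨B, hB, hd⟩
  · exact absurd (h'.2.1.2 B hB A hA).symm hd

variable {β : Type*}

noncomputable def FF (f : β → ℝ≥0∞) (m : ℕ) : ℝ≥0∞ :=
  ∑' s : Finset β, if s.card = m then ∏ x ∈ s, f x else 0

lemma FF_zero (f : β → ℝ≥0∞) : FF f 0 = 1 := by
  unfold FF
  rw [tsum_eq_sum (s := {(∅ : Finset β)}) (fun b hb => by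
    rw [Finset.mem_singleton] at hb
    rw [if_neg (fun hc => hb (Finset.card_eq_zero.1 hc))])]
  simp

lemma FF_succ_le (f : β → ℝ≥0∞) (m : ℕ) :
    ((m + 1 : ℕ) : ℝ≥0∞) * FF f (m + 1) ≤ (∑' x, f x) * FF f m := by
  classical
  have key : ((m + 1 : ℕ) : ℝ≥0∞) * FF f (m + 1) =
      ∑' (x : β) (s : Finset β),
        if x ∈ s ∧ s.card = m + 1 then f x * ∏ y ∈ s.erase x, f y else 0 := by
    rw [← ENNReal.tsum_comm]
    unfold FF
    rw [← ENNReal.tsum_mul_left]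
    congr 1
    funext s
    by_cases hc : s.card = m + 1
    · rw [if_pos hc]
      rw [tsum_eq_sum (s := s) (fun b hb => by rw [if_neg (fun h => hb h.1)])]
      have : ∀ x ∈ s, (if x ∈ s ∧ s.card = m + 1 then f x * ∏ y ∈ s.erase x, f y else 0)
          = ∏ y ∈ s, f y := by
        intro x hx
        rw [if_pos ⟨hx, hc⟩, Finset.mul_prod_erase s f hx]
      rw [Finset.sum_congr rfl this, Finset.sum_const, hc, nsmul_eq_mul]
    · rw [if_neg hc, mul_zero]
      symm
      apply (Summable.tsum_eq_zero_iff ENNReal.summable).2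
      intro x
      rw [if_neg (fun h : x ∈ s ∧ s.card = m + 1 => hc h.2)]
  rw [key]
  have hx : ∀ x : β,
      (∑' s : Finset β, if x ∈ s ∧ s.card = m + 1 then f x * ∏ y ∈ s.erase x, f y else 0)
        ≤ f x * FF f m := by
    intro x
    have h1 : (∑' s : Finset β, if x ∈ s ∧ s.card = m + 1 then f x * ∏ y ∈ s.erase x, f y else 0)
        = ∑' s : ({s : Finset β | x ∈ s} : Set (Finset β)),
            (if (s : Finset β).card = m + 1 then f x * ∏ y ∈ (s : Finset β).erase x, f y else 0) := by
      rw [tsum_subtype ({s : Finset β | x ∈ s} : Set (Finset β))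
        (fun s => if s.card = m + 1 then f x * ∏ y ∈ s.erase x, f y else 0)]
      congr 1
      funext s
      rw [Set.indicator_apply]
      by_cases hxs : x ∈ s
      · rw [if_pos (show s ∈ {s : Finset β | x ∈ s} from hxs)]
        by_cases hc : s.card = m + 1
        · rw [if_pos (⟨hxs, hc⟩ : x ∈ s ∧ s.card = m + 1), if_pos hc]
        · rw [if_neg (fun h : x ∈ s ∧ s.card = m + 1 => hc h.2), if_neg hc]
      · rw [if_neg (show s ∉ {s : Finset β | x ∈ s} from hxs),
          if_neg (fun h : x ∈ s ∧ s.card = m + 1 => hxs h.1)]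
    rw [h1]
    have h2 : ∀ s : ({s : Finset β | x ∈ s} : Set (Finset β)),
        (if (s : Finset β).card = m + 1 then f x * ∏ y ∈ (s : Finset β).erase x, f y else 0)
          ≤ f x * (if ((s : Finset β).erase x).card = m then ∏ y ∈ (s : Finset β).erase x, f y else 0) := by
      intro s
      by_cases hc : (s : Finset β).card = m + 1
      · rw [if_pos hc, if_pos (by rw [Finset.card_erase_of_mem s.2, hc]; rfl)]
      · rw [if_neg hc]
        exact bot_le
    calc _ ≤ ∑' s : ({s : Finset β | x ∈ s} : Set (Finset β)),
        f x * (if ((s : Finset β).erase x).card = m then ∏ y ∈ (s : Finset β).erase x, f y else 0) :=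
          ENNReal.tsum_le_tsum h2
      _ = f x * ∑' s : ({s : Finset β | x ∈ s} : Set (Finset β)),
          (if ((s : Finset β).erase x).card = m then ∏ y ∈ (s : Finset β).erase x, f y else 0) :=
          ENNReal.tsum_mul_left
      _ ≤ f x * FF f m := by
          apply mul_le_mul_right
          unfold FF
          exact ENNReal.tsum_comp_le_tsum_of_injective
            (f := fun s : ({s : Finset β | x ∈ s} : Set (Finset β)) => (s : Finset β).erase x)
            (fun s t hst => Subtype.ext (by
              have h2' : insert x ((s : Finset β).erase x) = insert x ((t : Finset β).erase x) :=
                congrArg (insert x) hst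
              rwa [Finset.insert_erase s.2, Finset.insert_erase t.2] at h2'))
            (fun s => if s.card = m then ∏ y ∈ s, f y else 0)
  calc _ ≤ ∑' x : β, f x * FF f m := ENNReal.tsum_le_tsum hx
    _ = (∑' x, f x) * FF f m := ENNReal.tsum_mul_right

lemma fact_mul_FF_le (f : β → ℝ≥0∞) : ∀ m, (m.factorial : ℝ≥0∞) * FF f m ≤ (∑' x, f x) ^ m := by
  intro m
  induction m with
  | zero => simp [FF_zero]
  | succ m ih =>
    have : ((m + 1).factorial : ℝ≥0∞) * FF f (m + 1)
        = (m.factorial : ℝ≥0∞) * (((m + 1 : ℕ) : ℝ≥0∞) * FF f (m + 1)) := by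
      rw [← mul_assoc, ← Nat.cast_mul, Nat.factorial_succ, Nat.mul_comm]
    rw [this, pow_succ]
    calc (m.factorial : ℝ≥0∞) * (((m + 1 : ℕ) : ℝ≥0∞) * FF f (m + 1))
        ≤ (m.factorial : ℝ≥0∞) * ((∑' x, f x) * FF f m) :=
          mul_le_mul_right (FF_succ_le f m) _
      _ = (∑' x, f x) * ((m.factorial : ℝ≥0∞) * FF f m) := by ring
      _ ≤ (∑' x, f x) * (∑' x, f x) ^ m := mul_le_mul_right ih _
      _ = (∑' x, f x) ^ m * (∑' x, f x) := by ring

lemma tsum_finsets_le_exp (f : β → ℝ≥0∞) (r : ℝ) (hr : 0 ≤ r)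
    (ht : ∑' x, f x ≤ ENNReal.ofReal r) :
    (∑' s : Finset β, if s ≠ ∅ then ∏ x ∈ s, f x else 0) ≤
      ENNReal.ofReal (Real.exp r - 1) := by
  classical
  set G : Finset β → ℝ≥0∞ := fun s => if s ≠ ∅ then ∏ x ∈ s, f x else 0 with hG
  have hsigma : (∑' s : Finset β, G s)
      = ∑' (n : ℕ) (s : {s : Finset β // s.card = n}), G s.1 := by
    rw [← (Equiv.sigmaFiberEquiv (fun s : Finset β => s.card)).tsum_eq G]
    rw [ENNReal.tsum_sigma' (fun p => G ((Equiv.sigmaFiberEquiv (fun s : Finset β => s.card)) p))]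
    rfl
  set Hn : ℕ → ℝ≥0∞ := fun n => ∑' s : {s : Finset β // s.card = n}, G s.1 with hHn
  have hH0 : Hn 0 = 0 := by
    rw [hHn]
    simp only
    apply (Summable.tsum_eq_zero_iff ENNReal.summable).2
    intro s
    have : s.1 = ∅ := Finset.card_eq_zero.1 s.2
    simp [hG, this]
  have hHle : ∀ n, Hn n ≤ FF f n := by
    intro n
    rw [hHn]
    simp only
    have : ∀ s : {s : Finset β // s.card = n}, G s.1 ≤
        (if s.1.card = n then ∏ x ∈ s.1, f x else 0) := by
      intro s
      rw [if_pos s.2, hG]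
      by_cases h : s.1 = ∅
      · simp [h]
      · simp only
        rw [if_pos h]
    calc _ ≤ ∑' s : {s : Finset β // s.card = n},
          (if s.1.card = n then ∏ x ∈ s.1, f x else 0) :=
        ENNReal.tsum_le_tsum this
      _ ≤ FF f n := ENNReal.tsum_comp_le_tsum_of_injective Subtype.val_injective _
  have hFle : ∀ n : ℕ, FF f (n + 1) ≤ ENNReal.ofReal (r ^ (n + 1) / (n + 1).factorial) := by
    intro n
    have h1 : ((n + 1).factorial : ℝ≥0∞) * FF f (n + 1) ≤ ENNReal.ofReal (r ^ (n + 1)) := by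
      calc _ ≤ (∑' x, f x) ^ (n + 1) := fact_mul_FF_le f (n + 1)
        _ ≤ ENNReal.ofReal r ^ (n + 1) := pow_le_pow_left' ht _
        _ = ENNReal.ofReal (r ^ (n + 1)) := (ENNReal.ofReal_pow hr _).symm
    rw [ENNReal.ofReal_div_of_pos (by positivity), ENNReal.ofReal_natCast]
    rw [ENNReal.le_div_iff_mul_le (Or.inl (Nat.cast_ne_zero.2 (Nat.factorial_ne_zero _)))
      (Or.inl (ENNReal.natCast_ne_top _))]
    rw [mul_comm]
    exact h1
  have hexp : ∑' n : ℕ, (r ^ (n + 1) / (n + 1).factorial) = Real.exp r - 1 := by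
    have hsum := Real.summable_pow_div_factorial r
    have := Summable.tsum_eq_zero_add hsum
    have hexpeq : Real.exp r = ∑' n : ℕ, r ^ n / n.factorial := by
      rw [Real.exp_eq_exp_ℝ, NormedSpace.exp_eq_tsum_div]
    rw [hexpeq, this]
    simp
  calc (∑' s : Finset β, G s) = ∑' n : ℕ, Hn n := hsigma
    _ = Hn 0 + ∑' n : ℕ, Hn (n + 1) := tsum_eq_zero_add' ENNReal.summable
    _ = ∑' n : ℕ, Hn (n + 1) := by rw [hH0, zero_add]
    _ ≤ ∑' n : ℕ, ENNReal.ofReal (r ^ (n + 1) / (n + 1).factorial) :=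
        ENNReal.tsum_le_tsum (fun n => le_trans (hHle (n + 1)) (hFle n))
    _ = ENNReal.ofReal (∑' n : ℕ, r ^ (n + 1) / (n + 1).factorial) :=
        (ENNReal.ofReal_tsum_of_nonneg (fun n => div_nonneg (pow_nonneg hr _) (Nat.cast_nonneg _))
          ((Real.summable_pow_div_factorial r).comp_injective (add_left_injective 1))).symm
    _ = ENNReal.ofReal (Real.exp r - 1) := by rw [hexp]


section Main

variable {V : Type*} (S : Set (Finset V)) (c u : Finset V → ℝ)

/-- The weight of a multiset. -/
noncomputable def ww (γ : Multiset (Finset V)) : ℝ≥0∞ :=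
  (γ.map fun X => ENNReal.ofReal (u X)).prod

lemma ww_zero : ww u 0 = 1 := by simp [ww]

lemma ww_cons (X : Finset V) (γ : Multiset (Finset V)) :
    ww u (X ::ₘ γ) = ENNReal.ofReal (u X) * ww u γ := by
  simp [ww]

lemma ww_add (γ₁ γ₂ : Multiset (Finset V)) : ww u (γ₁ + γ₂) = ww u γ₁ * ww u γ₂ := by
  simp [ww, Multiset.prod_add]

lemma ww_sum_finset (s : Finset (Multiset (Finset V))) :
    ww u (∑ δ ∈ s, δ) = ∏ δ ∈ s, ww u δ := by
  classical
  induction s using Finset.induction with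
  | empty => simp [ww]
  | insert _ _ h ih => rw [Finset.sum_insert h, Finset.prod_insert h, ww_add, ih]

/-- truncated sum over all multisets connected to `Z` -/
noncomputable def CAx (n : ℕ) (Z : Finset V) : ℝ≥0∞ :=
  ∑' γ : Multiset (Finset V),
    if γ ≠ 0 ∧ (∀ X ∈ γ, X ∈ S) ∧ Multiset.card γ ≤ n ∧ MConn (Z ::ₘ γ) then ww u γ else 0

/-- truncated sum over connected multisets connected to `Z` -/
noncomputable def CCx (n : ℕ) (Z : Finset V) : ℝ≥0∞ :=
  ∑' γ : Multiset (Finset V),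
    if γ ≠ 0 ∧ (∀ X ∈ γ, X ∈ S) ∧ Multiset.card γ ≤ n ∧ MConn γ ∧ MConn (Z ::ₘ γ)
    then ww u γ else 0

lemma tsum_ite_eq_subtype (P : Multiset (Finset V) → Prop) (f : Multiset (Finset V) → ℝ≥0∞) :
    (∑' γ : Multiset (Finset V), if P γ then f γ else 0)
      = ∑' γ : ({γ | P γ} : Set (Multiset (Finset V))), f γ.1 := by
  rw [tsum_subtype ({γ | P γ} : Set (Multiset (Finset V))) f]
  apply tsum_congr
  intro γ
  rw [Set.indicator_apply]
  by_cases h : P γ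
  · rw [if_pos h, if_pos (show γ ∈ {γ | P γ} from h)]
  · rw [if_neg h, if_neg (show γ ∉ {γ | P γ} from h)]

lemma stepC (hc0 : ∀ X, 0 ≤ c X)
    (hyp : ∀ Z ∈ S, ∑' X : S, mchi Z {X.1} * ENNReal.ofReal (u X.1) *
        ENNReal.ofReal (Real.exp (c X.1)) ≤ ENNReal.ofReal (c Z))
    (n : ℕ) (IH : ∀ Z ∈ S, CAx S u n Z ≤ ENNReal.ofReal (Real.exp (c Z)) - 1) :
    ∀ Z ∈ S, CCx S u (n + 1) Z ≤ ENNReal.ofReal (c Z) := by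
  intro Z hZ
  classical
  set P : Multiset (Finset V) → Prop := fun γ =>
    γ ≠ 0 ∧ (∀ X ∈ γ, X ∈ S) ∧ Multiset.card γ ≤ n + 1 ∧ MConn γ ∧ MConn (Z ::ₘ γ) with hP
  have hsub : CCx S u (n + 1) Z = ∑' γ : ({γ | P γ} : Set (Multiset (Finset V))), ww u γ.1 := by
    unfold CCx
    rw [tsum_subtype ({γ | P γ} : Set (Multiset (Finset V))) (ww u)]
    apply tsum_congr
    intro γ
    rw [Set.indicator_apply]
    by_cases hq : P γ
    · rw [if_pos hq, if_pos (show γ ∈ {γ | P γ} from hq)]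
    · rw [if_neg hq, if_neg (show γ ∉ {γ | P γ} from hq)]
  have hpk : ∀ γ : ({γ | P γ} : Set (Multiset (Finset V))), ∃ X, X ∈ γ.1 ∧ ¬Disjoint Z X := by
    intro γ
    obtain ⟨X, h1, h2⟩ := exists_hit γ.2.2.2.2.2 γ.2.1
    exact ⟨X, h1, h2⟩
  set pk : ({γ | P γ} : Set (Multiset (Finset V))) → Finset V := fun γ => (hpk γ).choose with hpkdef
  have hpks : ∀ γ, pk γ ∈ γ.1 ∧ ¬Disjoint Z (pk γ) := fun γ => (hpk γ).choose_spec
  set h : Finset V × Multiset (Finset V) → ℝ≥0∞ := fun p =>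
    (if p.1 ∈ S ∧ ¬Disjoint Z p.1 then ENNReal.ofReal (u p.1) else 0) *
    (if (∀ X ∈ p.2, X ∈ S) ∧ Multiset.card p.2 ≤ n ∧ MConn (p.1 ::ₘ p.2)
      then ww u p.2 else 0) with hh
  set Ψ : ({γ | P γ} : Set (Multiset (Finset V))) → Finset V × Multiset (Finset V) :=
    fun γ => (pk γ, γ.1.erase (pk γ)) with hΨ
  have hΨinj : Function.Injective Ψ := by
    intro γ γ' he
    have h1 : pk γ = pk γ' := congrArg Prod.fst he
    have h2 : γ.1.erase (pk γ) = γ'.1.erase (pk γ') := congrArg Prod.snd he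
    apply Subtype.ext
    calc γ.1 = pk γ ::ₘ γ.1.erase (pk γ) := (Multiset.cons_erase (hpks γ).1).symm
      _ = pk γ' ::ₘ γ'.1.erase (pk γ') := by rw [h2, h1]
      _ = γ'.1 := Multiset.cons_erase (hpks γ').1
  have hpoint : ∀ γ : ({γ | P γ} : Set (Multiset (Finset V))), ww u γ.1 = h (Ψ γ) := by
    intro γ
    obtain ⟨hmem, hdisj⟩ := hpks γ
    obtain ⟨hne, hS, hcard, hMc, hMZc⟩ := γ.2
    have hc1 : pk γ ∈ S ∧ ¬Disjoint Z (pk γ) := ⟨hS _ hmem, hdisj⟩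
    have hc2 : (∀ X ∈ γ.1.erase (pk γ), X ∈ S) ∧
        Multiset.card (γ.1.erase (pk γ)) ≤ n ∧ MConn (pk γ ::ₘ γ.1.erase (pk γ)) := by
      refine ⟨fun X hX => hS X (Multiset.mem_of_mem_erase hX), ?_, ?_⟩
      · rw [Multiset.card_erase_of_mem hmem, Nat.pred_eq_sub_one]
        have h1 : 1 ≤ Multiset.card γ.1 := Multiset.card_pos.2 hne
        omega
      · rw [Multiset.cons_erase hmem]
        exact hMc
    rw [hh]
    simp only [hΨ]
    rw [if_pos hc1, if_pos hc2]
    conv_lhs => rw [← Multiset.cons_erase hmem]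
    rw [ww_cons]
  calc CCx S u (n + 1) Z
      = ∑' γ : ({γ | P γ} : Set (Multiset (Finset V))), h (Ψ γ) := by
        rw [hsub]; exact tsum_congr hpoint
    _ ≤ ∑' p : Finset V × Multiset (Finset V), h p :=
        ENNReal.tsum_comp_le_tsum_of_injective hΨinj h
    _ = ∑' X : Finset V, (if X ∈ S ∧ ¬Disjoint Z X then ENNReal.ofReal (u X) else 0) *
          (∑' δ : Multiset (Finset V),
            if (∀ Y ∈ δ, Y ∈ S) ∧ Multiset.card δ ≤ n ∧ MConn (X ::ₘ δ) then ww u δ else 0) := by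
        have hprod := ENNReal.tsum_prod (f := fun (X : Finset V) (δ : Multiset (Finset V)) =>
          (if X ∈ S ∧ ¬Disjoint Z X then ENNReal.ofReal (u X) else 0) *
          (if (∀ Y ∈ δ, Y ∈ S) ∧ Multiset.card δ ≤ n ∧ MConn (X ::ₘ δ) then ww u δ else 0))
        exact hprod.trans (tsum_congr (fun X => ENNReal.tsum_mul_left))
    _ ≤ ∑' X : Finset V, (if X ∈ S ∧ ¬Disjoint Z X then
          ENNReal.ofReal (u X) * ENNReal.ofReal (Real.exp (c X)) else 0) := by
        apply ENNReal.tsum_le_tsum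
        intro X
        by_cases hX : X ∈ S ∧ ¬Disjoint Z X
        · rw [if_pos hX, if_pos hX]
          have hI : (∑' δ : Multiset (Finset V),
              if (∀ Y ∈ δ, Y ∈ S) ∧ Multiset.card δ ≤ n ∧ MConn (X ::ₘ δ) then ww u δ else 0)
                = 1 + CAx S u n X := by
            rw [ENNReal.tsum_eq_add_tsum_ite 0]
            congr 1
            · rw [if_pos ⟨fun Y hY => absurd hY (Multiset.notMem_zero Y), by simp,
                by rw [Multiset.cons_zero]; exact mconn_singleton X⟩, ww_zero]
            · unfold CAx
              apply tsum_congr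
              intro δ
              by_cases hδ : δ = 0
              · rw [if_pos hδ, if_neg (fun hcond => hcond.1 hδ)]
              · rw [if_neg hδ]
                by_cases hcond : (∀ Y ∈ δ, Y ∈ S) ∧ Multiset.card δ ≤ n ∧ MConn (X ::ₘ δ)
                · rw [if_pos hcond, if_pos ⟨hδ, hcond⟩]
                · rw [if_neg hcond, if_neg (fun hc => hcond hc.2)]
          rw [hI]
          apply mul_le_mul_right
          have h1 : (1 : ℝ≥0∞) ≤ ENNReal.ofReal (Real.exp (c X)) :=
            ENNReal.one_le_ofReal.2 (Real.one_le_exp (hc0 X))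
          calc 1 + CAx S u n X ≤ 1 + (ENNReal.ofReal (Real.exp (c X)) - 1) :=
              add_le_add_right (IH X hX.1) 1
            _ = ENNReal.ofReal (Real.exp (c X)) := add_tsub_cancel_of_le h1
        · rw [if_neg hX, if_neg hX, zero_mul]
    _ ≤ ENNReal.ofReal (c Z) := by
        refine le_trans (le_of_eq ?_) (hyp Z hZ)
        rw [tsum_subtype S (fun X => mchi Z {X} * ENNReal.ofReal (u X) *
          ENNReal.ofReal (Real.exp (c X)))]
        apply tsum_congr
        intro X
        rw [Set.indicator_apply]
        by_cases hXS : X ∈ S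
        · rw [if_pos hXS]
          by_cases hd : ¬Disjoint Z X
          · rw [if_pos ⟨hXS, hd⟩]
            unfold mchi
            rw [if_pos (mconn_pair.2 hd), one_mul]
          · rw [if_neg (fun hc => hd hc.2)]
            unfold mchi
            rw [if_neg (fun hm => hd (mconn_pair.1 hm)), zero_mul, zero_mul]
        · rw [if_neg hXS, if_neg (fun hc => hXS hc.1)]

lemma stepA (hc0 : ∀ X, 0 ≤ c X) (n : ℕ)
    (IH : ∀ Z ∈ S, CCx S u n Z ≤ ENNReal.ofReal (c Z)) :
    ∀ Z ∈ S, CAx S u n Z ≤ ENNReal.ofReal (Real.exp (c Z)) - 1 := by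
  intro Z hZ
  classical
  set Q : Multiset (Finset V) → Prop := fun γ =>
    γ ≠ 0 ∧ (∀ X ∈ γ, X ∈ S) ∧ Multiset.card γ ≤ n ∧ MConn (Z ::ₘ γ) with hQ
  set f : Multiset (Finset V) → ℝ≥0∞ := fun δ =>
    if δ ≠ 0 ∧ (∀ X ∈ δ, X ∈ S) ∧ Multiset.card δ ≤ n ∧ MConn δ ∧ MConn (Z ::ₘ δ)
    then ww u δ else 0 with hf
  have hft : ∑' δ, f δ = CCx S u n Z := rfl
  have hsub : CAx S u n Z = ∑' γ : ({γ | Q γ} : Set (Multiset (Finset V))), ww u γ.1 := by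
    unfold CAx
    rw [tsum_subtype ({γ | Q γ} : Set (Multiset (Finset V))) (ww u)]
    apply tsum_congr
    intro γ
    rw [Set.indicator_apply]
    by_cases hq : Q γ
    · rw [if_pos hq, if_pos (show γ ∈ {γ | Q γ} from hq)]
    · rw [if_neg hq, if_neg (show γ ∉ {γ | Q γ} from hq)]
  have hpoint : ∀ γ : ({γ | Q γ} : Set (Multiset (Finset V))),
      ww u γ.1 = (if comps γ.1 ≠ ∅ then ∏ δ ∈ comps γ.1, f δ else 0) := by
    intro γ
    obtain ⟨hne0, hS, hcard, hM⟩ := γ.2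
    have hne : ∀ X ∈ γ.1, X ≠ ∅ := fun X hX => ne_empty_of_mem hM hX
    have hsum := comps_sum (Multiset.card γ.1) γ.1 rfl hne
    obtain ⟨δ₀, hδ₀⟩ := comps_nonempty hne0
    rw [if_pos (Finset.ne_empty_of_mem hδ₀)]
    have hfw : ∀ δ ∈ comps γ.1, f δ = ww u δ := by
      intro δ hδ
      have hδ' := mem_comps.1 hδ
      exact if_pos ⟨hδ'.1,
        fun X hX => hS X (Multiset.mem_of_le hδ'.2.1.1 hX),
        le_trans (comps_card_le hδ) hcard,
        hδ'.2.2,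
        mconn_cons_of hδ'.2.2 (comps_hit' hM hδ)⟩
    rw [Finset.prod_congr rfl hfw, ← ww_sum_finset, hsum]
  have hinj : Function.Injective
      (fun γ : ({γ | Q γ} : Set (Multiset (Finset V))) => comps γ.1) := by
    intro γ γ' he
    simp only at he
    have h1 : ∀ X ∈ γ.1, X ≠ (∅ : Finset V) := fun X hX => ne_empty_of_mem γ.2.2.2.2 hX
    have h2 : ∀ X ∈ γ'.1, X ≠ (∅ : Finset V) := fun X hX => ne_empty_of_mem γ'.2.2.2.2 hX
    apply Subtype.ext
    rw [← comps_sum (Multiset.card γ.1) γ.1 rfl h1, ← comps_sum (Multiset.card γ'.1) γ'.1 rfl h2, he]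
  calc CAx S u n Z
      = ∑' γ : ({γ | Q γ} : Set (Multiset (Finset V))),
          (fun s : Finset (Multiset (Finset V)) => if s ≠ ∅ then ∏ δ ∈ s, f δ else 0)
            (comps γ.1) := by rw [hsub]; exact tsum_congr hpoint
    _ ≤ ∑' s : Finset (Multiset (Finset V)), (if s ≠ ∅ then ∏ δ ∈ s, f δ else 0) :=
        ENNReal.tsum_comp_le_tsum_of_injective hinj _
    _ ≤ ENNReal.ofReal (Real.exp (c Z) - 1) := by
        refine le_trans (le_of_eq (tsum_congr (fun s => ?_)))
          (tsum_finsets_le_exp f (c Z) (hc0 Z) (hft ▸ IH Z hZ))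
        by_cases hs : s = (∅ : Finset (Multiset (Finset V)))
        · simp [hs]
        · rw [if_pos hs, if_pos hs]
    _ = ENNReal.ofReal (Real.exp (c Z)) - 1 := by
        rw [ENNReal.ofReal_sub _ zero_le_one, ENNReal.ofReal_one]

lemma mainInd (hc0 : ∀ X, 0 ≤ c X)
    (hyp : ∀ Z ∈ S, ∑' X : S, mchi Z {X.1} * ENNReal.ofReal (u X.1) *
        ENNReal.ofReal (Real.exp (c X.1)) ≤ ENNReal.ofReal (c Z)) :
    ∀ n, (∀ Z ∈ S, CCx S u n Z ≤ ENNReal.ofReal (c Z)) ∧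
      (∀ Z ∈ S, CAx S u n Z ≤ ENNReal.ofReal (Real.exp (c Z)) - 1) := by
  intro n
  induction n with
  | zero =>
    have h0 : ∀ Z ∈ S, CCx S u 0 Z ≤ ENNReal.ofReal (c Z) := by
      intro Z hZ
      have : CCx S u 0 Z = 0 := by
        apply (Summable.tsum_eq_zero_iff ENNReal.summable).2
        intro γ
        apply if_neg
        rintro ⟨h1, -, h3, -⟩
        have := Multiset.card_pos.2 h1
        omega
      simp [this]
    have hA0 : ∀ Z ∈ S, CAx S u 0 Z ≤ ENNReal.ofReal (Real.exp (c Z)) - 1 := by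
      intro Z hZ
      have : CAx S u 0 Z = 0 := by
        apply (Summable.tsum_eq_zero_iff ENNReal.summable).2
        intro γ
        apply if_neg
        rintro ⟨h1, -, h3, -⟩
        have := Multiset.card_pos.2 h1
        omega
      simp [this]
    exact ⟨h0, hA0⟩
  | succ n ih =>
    have hC := stepC S c u hc0 hyp n ih.2
    exact ⟨hC, stepA S c u hc0 (n + 1) hC⟩

lemma rangesum_eq_CAx (Z : Finset V) (N : ℕ) (γ : Multiset (Finset V)) :
    (∑ k ∈ Finset.range N,
        if Multiset.card γ = k + 1 ∧ (∀ X ∈ γ, X ∈ S) then mchi Z γ * ww u γ else 0)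
      = if γ ≠ 0 ∧ (∀ X ∈ γ, X ∈ S) ∧ Multiset.card γ ≤ N ∧ MConn (Z ::ₘ γ)
        then ww u γ else 0 := by
  have hterm : ∀ k ∈ Finset.range N,
      (if Multiset.card γ = k + 1 ∧ (∀ X ∈ γ, X ∈ S) then mchi Z γ * ww u γ else 0)
        = if k = Multiset.card γ - 1 then
            (if 1 ≤ Multiset.card γ ∧ (∀ X ∈ γ, X ∈ S) then mchi Z γ * ww u γ else 0)
          else 0 := by
    intro k _
    by_cases h1 : Multiset.card γ = k + 1
    · by_cases h2 : ∀ X ∈ γ, X ∈ S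
      · rw [if_pos ⟨h1, h2⟩, if_pos (by omega), if_pos ⟨by omega, h2⟩]
      · rw [if_neg (fun h => h2 h.2)]
        by_cases h3 : k = Multiset.card γ - 1
        · rw [if_pos h3, if_neg (fun h => h2 h.2)]
        · rw [if_neg h3]
    · rw [if_neg (fun h => h1 h.1)]
      by_cases h3 : k = Multiset.card γ - 1
      · rw [if_pos h3,
          if_neg (fun h : 1 ≤ Multiset.card γ ∧ (∀ X ∈ γ, X ∈ S) => h1 (by omega))]
      · rw [if_neg h3]
  rw [Finset.sum_congr rfl hterm, Finset.sum_ite_eq' (Finset.range N) (Multiset.card γ - 1)]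
  by_cases hM : MConn (Z ::ₘ γ)
  · have hmchi : mchi Z γ = 1 := by unfold mchi; exact if_pos hM
    rw [hmchi, one_mul]
    by_cases hc : γ ≠ 0 ∧ (∀ X ∈ γ, X ∈ S) ∧ Multiset.card γ ≤ N ∧ MConn (Z ::ₘ γ)
    · have h1 : 1 ≤ Multiset.card γ := Multiset.card_pos.2 hc.1
      have h2 := hc.2.2.1
      rw [if_pos hc, if_pos (Finset.mem_range.2 (by omega)), if_pos ⟨h1, hc.2.1⟩]
    · by_cases hr : Multiset.card γ - 1 ∈ Finset.range N
      · rw [if_pos hr, if_neg, if_neg hc]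
        rintro ⟨h1, h2⟩
        have h3 := Finset.mem_range.1 hr
        exact hc ⟨by rw [← Multiset.card_pos]; omega, h2, by omega, hM⟩
      · rw [if_neg hr, if_neg hc]
  · have hmchi : mchi Z γ = 0 := by unfold mchi; exact if_neg hM
    rw [hmchi, zero_mul,
      if_neg (show ¬(γ ≠ 0 ∧ (∀ X ∈ γ, X ∈ S) ∧ Multiset.card γ ≤ N ∧ MConn (Z ::ₘ γ)) from
        fun h => hM h.2.2.2)]
    simp

lemma rangesum_eq_CCx (Z : Finset V) (N : ℕ) (γ : Multiset (Finset V)) :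
    (∑ k ∈ Finset.range N,
        if Multiset.card γ = k + 1 ∧ ((∀ X ∈ γ, X ∈ S) ∧ MConn γ)
        then mchi Z γ * ww u γ else 0)
      = if γ ≠ 0 ∧ (∀ X ∈ γ, X ∈ S) ∧ Multiset.card γ ≤ N ∧ MConn γ ∧ MConn (Z ::ₘ γ)
        then ww u γ else 0 := by
  have hterm : ∀ k ∈ Finset.range N,
      (if Multiset.card γ = k + 1 ∧ ((∀ X ∈ γ, X ∈ S) ∧ MConn γ)
        then mchi Z γ * ww u γ else 0)
        = if k = Multiset.card γ - 1 then
            (if 1 ≤ Multiset.card γ ∧ ((∀ X ∈ γ, X ∈ S) ∧ MConn γ)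
              then mchi Z γ * ww u γ else 0)
          else 0 := by
    intro k _
    by_cases h1 : Multiset.card γ = k + 1
    · by_cases h2 : (∀ X ∈ γ, X ∈ S) ∧ MConn γ
      · rw [if_pos ⟨h1, h2⟩, if_pos (by omega), if_pos ⟨by omega, h2⟩]
      · rw [if_neg (fun h => h2 h.2)]
        by_cases h3 : k = Multiset.card γ - 1
        · rw [if_pos h3, if_neg (fun h => h2 h.2)]
        · rw [if_neg h3]
    · rw [if_neg (fun h => h1 h.1)]
      by_cases h3 : k = Multiset.card γ - 1
      · rw [if_pos h3,
          if_neg (fun h : 1 ≤ Multiset.card γ ∧ ((∀ X ∈ γ, X ∈ S) ∧ MConn γ) =>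
            h1 (by omega))]
      · rw [if_neg h3]
  rw [Finset.sum_congr rfl hterm, Finset.sum_ite_eq' (Finset.range N) (Multiset.card γ - 1)]
  by_cases hM : MConn (Z ::ₘ γ)
  · have hmchi : mchi Z γ = 1 := by unfold mchi; exact if_pos hM
    rw [hmchi, one_mul]
    by_cases hc : γ ≠ 0 ∧ (∀ X ∈ γ, X ∈ S) ∧ Multiset.card γ ≤ N ∧ MConn γ ∧ MConn (Z ::ₘ γ)
    · have h1 : 1 ≤ Multiset.card γ := Multiset.card_pos.2 hc.1
      have h2 := hc.2.2.1
      rw [if_pos hc, if_pos (Finset.mem_range.2 (by omega)), if_pos ⟨h1, hc.2.1, hc.2.2.2.1⟩]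
    · by_cases hr : Multiset.card γ - 1 ∈ Finset.range N
      · rw [if_pos hr, if_neg, if_neg hc]
        rintro ⟨h1, h2⟩
        have h3 := Finset.mem_range.1 hr
        exact hc ⟨by rw [← Multiset.card_pos]; omega, h2.1, by omega, h2.2, hM⟩
      · rw [if_neg hr, if_neg hc]
  · have hmchi : mchi Z γ = 0 := by unfold mchi; exact if_neg hM
    rw [hmchi, zero_mul,
      if_neg (show ¬(γ ≠ 0 ∧ (∀ X ∈ γ, X ∈ S) ∧ Multiset.card γ ≤ N ∧ MConn γ ∧
          MConn (Z ::ₘ γ)) from fun h => hM h.2.2.2.2)]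
    simp

end Main

end MCL

/-- (Lemma 3.12.) Let `𝒮` be a family of finite subsets of `V` and
`c, u : 𝒮 → [0,∞)` with `∑_{X∈𝒮} χ(Z,X) u(X) e^{c(X)} ≤ c(Z)` for every `Z ∈ 𝒮`. Then
for every `Z ∈ 𝒮`:
(1) `∑_{k≥1} ∑_{[X₁,…,X_k]∈𝕊_k} χ(Z,X₁,…,X_k) ∏_j u(X_j) ≤ e^{c(Z)} - 1`, where `𝕊_k`
is the set of all `k`-element multisets of elements of `𝒮`; and
(2) `∑_{k≥1} ∑_{[X₁,…,X_k]∈ℙ_k} χ(Z,X₁,…,X_k) ∏_j u(X_j) ≤ c(Z)`, where `ℙ_k ⊆ 𝕊_k` is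
the subset of connected multisets. -/
theorem multiset_convergence_lemma {V : Type*}
    (S : Set (Finset V)) (c u : Finset V → ℝ)
    (hc0 : ∀ X, 0 ≤ c X) (hu0 : ∀ X, 0 ≤ u X)
    (hyp : ∀ Z ∈ S, ∑' X : S, mchi Z {X.1} * ENNReal.ofReal (u X.1) *
        ENNReal.ofReal (Real.exp (c X.1)) ≤ ENNReal.ofReal (c Z)) :
    ∀ Z ∈ S,
      (∑' k : ℕ, ∑' γ : {γ : Multiset (Finset V) // γ.card = k + 1 ∧ ∀ X ∈ γ, X ∈ S},
          mchi Z γ.1 * (γ.1.map fun X => ENNReal.ofReal (u X)).prod ≤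
        ENNReal.ofReal (Real.exp (c Z) - 1)) ∧
      (∑' k : ℕ, ∑' γ : {γ : Multiset (Finset V) //
            γ.card = k + 1 ∧ (∀ X ∈ γ, X ∈ S) ∧ MConn γ},
          mchi Z γ.1 * (γ.1.map fun X => ENNReal.ofReal (u X)).prod ≤
        ENNReal.ofReal (c Z)) := by
  intro Z hZ
  have hmain := MCL.mainInd S c u hc0 hyp
  constructor
  · rw [ENNReal.tsum_eq_iSup_nat]
    apply iSup_le
    intro N
    have hk : ∀ k ∈ Finset.range N,
        (∑' γ : {γ : Multiset (Finset V) // γ.card = k + 1 ∧ ∀ X ∈ γ, X ∈ S},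
          mchi Z γ.1 * (γ.1.map fun X => ENNReal.ofReal (u X)).prod)
        = ∑' γ : Multiset (Finset V),
            if Multiset.card γ = k + 1 ∧ (∀ X ∈ γ, X ∈ S)
            then mchi Z γ * MCL.ww u γ else 0 := by
      intro k _
      have hts := tsum_subtype
        ({γ : Multiset (Finset V) | Multiset.card γ = k + 1 ∧ (∀ X ∈ γ, X ∈ S)})
        (fun γ => mchi Z γ * MCL.ww u γ)
      refine hts.trans (tsum_congr fun γ => ?_)
      rw [Set.indicator_apply]
      by_cases h : Multiset.card γ = k + 1 ∧ (∀ X ∈ γ, X ∈ S)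
      · rw [if_pos (show γ ∈ {γ : Multiset (Finset V) |
            Multiset.card γ = k + 1 ∧ (∀ X ∈ γ, X ∈ S)} from h), if_pos h]
      · rw [if_neg (show γ ∉ {γ : Multiset (Finset V) |
            Multiset.card γ = k + 1 ∧ (∀ X ∈ γ, X ∈ S)} from h), if_neg h]
    rw [Finset.sum_congr rfl hk, ← Summable.tsum_finsetSum (fun k _ => ENNReal.summable)]
    refine le_trans (le_of_eq ?_)
      (le_trans ((hmain N).2 Z hZ) (le_of_eq ?_))
    · exact tsum_congr (fun γ => MCL.rangesum_eq_CAx S u Z N γ)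
    · rw [ENNReal.ofReal_sub _ zero_le_one, ENNReal.ofReal_one]
  · rw [ENNReal.tsum_eq_iSup_nat]
    apply iSup_le
    intro N
    have hk : ∀ k ∈ Finset.range N,
        (∑' γ : {γ : Multiset (Finset V) //
            γ.card = k + 1 ∧ (∀ X ∈ γ, X ∈ S) ∧ MConn γ},
          mchi Z γ.1 * (γ.1.map fun X => ENNReal.ofReal (u X)).prod)
        = ∑' γ : Multiset (Finset V),
            if Multiset.card γ = k + 1 ∧ ((∀ X ∈ γ, X ∈ S) ∧ MConn γ)
            then mchi Z γ * MCL.ww u γ else 0 := by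
      intro k _
      have hts := tsum_subtype
        ({γ : Multiset (Finset V) | Multiset.card γ = k + 1 ∧ ((∀ X ∈ γ, X ∈ S) ∧ MConn γ)})
        (fun γ => mchi Z γ * MCL.ww u γ)
      refine hts.trans (tsum_congr fun γ => ?_)
      rw [Set.indicator_apply]
      by_cases h : Multiset.card γ = k + 1 ∧ ((∀ X ∈ γ, X ∈ S) ∧ MConn γ)
      · rw [if_pos (show γ ∈ {γ : Multiset (Finset V) |
            Multiset.card γ = k + 1 ∧ ((∀ X ∈ γ, X ∈ S) ∧ MConn γ)} from h), if_pos h]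
      · rw [if_neg (show γ ∉ {γ : Multiset (Finset V) |
            Multiset.card γ = k + 1 ∧ ((∀ X ∈ γ, X ∈ S) ∧ MConn γ)} from h), if_neg h]
    rw [Finset.sum_congr rfl hk, ← Summable.tsum_finsetSum (fun k _ => ENNReal.summable)]
    refine le_trans (le_of_eq ?_) ((hmain N).1 Z hZ)
    exact tsum_congr (fun γ => MCL.rangesum_eq_CCx S u Z N γ)
end
end

section
/- Let Φ be a local interaction on V with ‖Φ‖ := ‖Φ‖_{λ,μ} < ∞ for some λ > 0, μ ≥ 0, let Q be an observable supported in a finite subset Z of V, and let Y ⊆ V be finite. Define the derivation δ_{H_Y}(Q) := i[H_Y, Q]. Then for every m ∈ ℕ: ‖δ^m_{H_Y}(Q)‖ ≤ (2‖Φ‖/λ)^m · ‖Q‖ · e^{λ|Z|} · m!. -/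
set_option linter.unusedVariables false
set_option linter.unusedSectionVars false

open scoped BigOperators ENNReal Matrix.Norms.L2Operator

noncomputable section

variable {V : Type*} [DecidableEq V]

/-- The algebra of observables on the finite region `X`: linear operators on
`(ℂ^D)^{⊗ X}`, realized as matrices indexed by configurations `X → Fin D`. -/
abbrev Mat (D : ℕ) (X : Finset V) : Type _ :=
  Matrix ({x // x ∈ X} → Fin D) ({x // x ∈ X} → Fin D) ℂ

/-- The canonical embedding `𝔄_X → 𝔄_Y`, `Q ↦ Q ⊗ 𝟙_{Y∖X}`, for `X ⊆ Y`. -/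
def incl (D : ℕ) {X Y : Finset V} (h : X ⊆ Y) (M : Mat D X) : Mat D Y :=
  fun f g =>
    if ∀ v : {x // x ∈ Y}, v.1 ∉ X → f v = g v then
      M (fun v => f ⟨v.1, h v.2⟩) (fun v => g ⟨v.1, h v.2⟩)
    else 0

/-- `restr Λ L = Λ ∩ L` as a `Finset`. -/
def restr (Λ : Finset V) (L : Set V) : Finset V :=
  letI := Classical.decPred fun v : V => v ∈ L
  Λ.filter fun v => v ∈ L

theorem restr_subset (Λ : Finset V) (L : Set V) : restr Λ L ⊆ Λ := by
  letI := Classical.decPred fun v : V => v ∈ L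
  exact Finset.filter_subset _ _

/-- The (unnormalized) partial trace of `M ∈ 𝔄_Λ` over `Λ ∖ X`, giving an element of `𝔄_X`
(the reduced operator on `X`; for a state this is the marginal on `X`). -/
def ptr (D : ℕ) {Λ : Finset V} (X : Finset V) (M : Mat D Λ) : Mat D X :=
  fun a b =>
    ∑ h : {v : {x // x ∈ Λ} // v.1 ∉ X} → Fin D,
      M (fun v => if hv : v.1 ∈ X then a ⟨v.1, hv⟩ else h ⟨v, hv⟩)
        (fun v => if hv : v.1 ∈ X then b ⟨v.1, hv⟩ else h ⟨v, hv⟩)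

/-- The Hamiltonian `H_Y = ∑_{X ⊆ Y} Φ_X` of the local interaction `Φ` on the region `Y`. -/
def ham (D : ℕ) (Φ : ∀ X : Finset V, Mat D X) (Y : Finset V) : Mat D Y :=
  ∑ X ∈ Y.powerset.attach, incl D (Finset.mem_powerset.mp X.2) (Φ X.1)

/-- `e^{-β H_Y}`. -/
def gibbsExp (D : ℕ) (Φ : ∀ X : Finset V, Mat D X) (β : ℝ) (Y : Finset V) : Mat D Y :=
  NormedSpace.exp ((-(β : ℂ)) • ham D Φ Y)

/-- The partition function `Z_Y = Tr[e^{-β H_Y}]`. -/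
def partZ (D : ℕ) (Φ : ∀ X : Finset V, Mat D X) (β : ℝ) (Y : Finset V) : ℂ :=
  (gibbsExp D Φ β Y).trace

/-- The Gibbs state `ρ^Y_β = e^{-β H_Y}/Z_Y`. -/
def gibbs (D : ℕ) (Φ : ∀ X : Finset V, Mat D X) (β : ℝ) (Y : Finset V) : Mat D Y :=
  (partZ D Φ β Y)⁻¹ • gibbsExp D Φ β Y

/-- `tr_{Λ∖L}[M] ⊗ 𝟙_{Λ∖L} ∈ 𝔄_Λ` (unnormalized partial trace, re-embedded into `𝔄_Λ`). -/
def ptId (D : ℕ) (L : Set V) {Λ : Finset V} (M : Mat D Λ) : Mat D Λ :=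
  incl D (restr_subset Λ L) (ptr D (restr Λ L) M)

/-- The conditional expectation `E_L = tr_{Λ∖L}[·] ⊗ 𝟙_{Λ∖L} / D^{|Λ∖L|}` on `𝔄_Λ`. -/
def condExp (D : ℕ) (L : Set V) {Λ : Finset V} (M : Mat D Λ) : Mat D Λ :=
  (((D : ℂ) ^ (Λ.card - (restr Λ L).card))⁻¹) • ptId D L M

/-- The interaction norm `‖Φ‖_{λ,μ} = sup_{x ∈ V} ∑_{X ∋ x} ‖Φ_X‖ e^{λ|X| + μ·diam X}`
(as an extended real, so that it is always well defined), where `dd` is the diameter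
function for finite subsets of `V`. -/
def intNormE (D : ℕ) (dd : Finset V → ℝ) (Φ : ∀ X : Finset V, Mat D X)
    (lam mu : ℝ) : ℝ≥0∞ :=
  ⨆ x : V, ∑' X : {X : Finset V // x ∈ X},
    (‖Φ X.1‖₊ : ℝ≥0∞) * ENNReal.ofReal (Real.exp (lam * X.1.card + mu * dd X.1))

/-- The weighted interaction norm `‖Φ‖_w = sup_{x ∈ V} ∑_{X ∋ x} ‖Φ_X‖ e^{w(X)}`. -/
def intNormW (D : ℕ) (Φ : ∀ X : Finset V, Mat D X) (w : Finset V → ℝ) : ℝ≥0∞ :=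
  ⨆ x : V, ∑' X : {X : Finset V // x ∈ X},
    (‖Φ X.1‖₊ : ℝ≥0∞) * ENNReal.ofReal (Real.exp (w X.1))

/-- The system has *strong* local effective Hamiltonians at inverse temperature `β`:
for every `L ⊆ V` there is a local interaction `Φt L` such that (i) `Φt L X` is supported
in `X ∩ L`; (ii) `Φt L X = Φt L' X` whenever `X ∩ L = X ∩ L'`; (iii) for every finite `Λ`,
`-(1/β)·log E_L[e^{-β H_Λ}] = ∑_{X ⊆ Λ} Φt L X`, stated equivalently in exponential form
`E_L[e^{-β H_Λ}] = e^{-β ∑_{X ⊆ Λ} Φt L X}`. -/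
structure IsStrongEffective (D : ℕ) (Φ : ∀ X : Finset V, Mat D X) (β : ℝ)
    (Φt : Set V → ∀ X : Finset V, Mat D X) : Prop where
  herm : ∀ (L : Set V) (X : Finset V), (Φt L X).IsHermitian
  supported : ∀ (L : Set V) (X : Finset V),
    ∃ M : Mat D (restr X L), Φt L X = incl D (restr_subset X L) M
  compatible : ∀ (L L' : Set V) (X : Finset V), restr X L = restr X L' → Φt L X = Φt L' X
  effective : ∀ (L : Set V) (Λ : Finset V),
    condExp D L (gibbsExp D Φ β Λ) = NormedSpace.exp ((-(β : ℂ)) • ham D (Φt L) Λ)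

/-- `∑_{X ⊆ Λ, X ∩ L ≠ ∅} Φ_X ∈ 𝔄_Λ`. -/
def hamTouch (D : ℕ) (Φ : ∀ X : Finset V, Mat D X) (L : Set V) (Λ : Finset V) : Mat D Λ :=
  ∑ X ∈ Λ.powerset.attach,
    if (restr X.1 L).Nonempty then incl D (Finset.mem_powerset.mp X.2) (Φ X.1) else 0

/-- The system has *weak* local effective Hamiltonians at inverse temperature `β`:
for every `L ⊆ V` there is a local interaction `Φh L` such that (i) `Φh L X` is supported
in `X ∩ L`; (ii) `Φh L X = Φh L' X` whenever `X ∩ L = X ∩ L'`; (iii) for every finite `Λ`,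
`-(1/β)·log(tr_{Λ∖L}[e^{-β H_Λ}] ⊗ 𝟙) + (1/β)·log(Z_{Λ∖L})·𝟙 = ∑_{X ⊆ Λ, X∩L ≠ ∅} Φh L X`,
stated equivalently in exponential form
`tr_{Λ∖L}[e^{-β H_Λ}] ⊗ 𝟙 = Z_{Λ∖L} · e^{-β ∑_{X ⊆ Λ, X∩L ≠ ∅} Φh L X}`. -/
structure IsWeakEffective (D : ℕ) (Φ : ∀ X : Finset V, Mat D X) (β : ℝ)
    (Φh : Set V → ∀ X : Finset V, Mat D X) : Prop where
  herm : ∀ (L : Set V) (X : Finset V), (Φh L X).IsHermitian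
  supported : ∀ (L : Set V) (X : Finset V),
    ∃ M : Mat D (restr X L), Φh L X = incl D (restr_subset X L) M
  compatible : ∀ (L L' : Set V) (X : Finset V), restr X L = restr X L' → Φh L X = Φh L' X
  effective : ∀ (L : Set V) (Λ : Finset V),
    ptId D L (gibbsExp D Φ β Λ)
      = partZ D Φ β (Λ \ restr Λ L) • NormedSpace.exp ((-(β : ℂ)) • hamTouch D (Φh L) L Λ)

/-- `ρ_{AC} ρ_A^{-1} ⊗ ρ_C^{-1} - 𝟙 ∈ 𝔄_{A∪C}`, where `ρ_X` denotes the marginal on `X`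
of the Gibbs state on `Λ`, and the tensor product of the two inverses is realized as the
product of their canonical embeddings into `𝔄_{A∪C}`. -/
def mixOp (D : ℕ) (Φ : ∀ X : Finset V, Mat D X) (β : ℝ) {Λ A C : Finset V}
    (hA : A ⊆ Λ) (hC : C ⊆ Λ) : Mat D (A ∪ C) :=
  ptr D (A ∪ C) (gibbs D Φ β Λ) *
      incl D Finset.subset_union_left (ptr D A (gibbs D Φ β Λ))⁻¹ *
      incl D Finset.subset_union_right (ptr D C (gibbs D Φ β Λ))⁻¹ - 1



namespace DerivAux

variable {V : Type*} [DecidableEq V] {D : ℕ}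

/-- Restriction of a configuration. -/
def res {X Λ : Finset V} (h : X ⊆ Λ) (f : {x // x ∈ Λ} → Fin D) : {x // x ∈ X} → Fin D :=
  fun v => f ⟨v.1, h v.2⟩

/-- Patch a configuration on `X`. -/
def patch {X Λ : Finset V} (h : X ⊆ Λ) (f : {x // x ∈ Λ} → Fin D)
    (b : {x // x ∈ X} → Fin D) : {x // x ∈ Λ} → Fin D :=
  fun v => if hv : v.1 ∈ X then b ⟨v.1, hv⟩ else f v

lemma res_patch {X Λ : Finset V} (h : X ⊆ Λ) (f : {x // x ∈ Λ} → Fin D)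
    (b : {x // x ∈ X} → Fin D) : res h (patch h f b) = b :=
  funext fun v => by simp [res, patch, v.2]

lemma patch_not_mem {X Λ : Finset V} (h : X ⊆ Λ) (f : {x // x ∈ Λ} → Fin D)
    (b : {x // x ∈ X} → Fin D) {v : {x // x ∈ Λ}} (hv : v.1 ∉ X) :
    patch h f b v = f v := dif_neg hv

lemma patch_mem {X Λ : Finset V} (h : X ⊆ Λ) (f : {x // x ∈ Λ} → Fin D)
    (b : {x // x ∈ X} → Fin D) {v : {x // x ∈ Λ}} (hv : v.1 ∈ X) :
    patch h f b v = b ⟨v.1, hv⟩ := dif_pos hv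

lemma patch_eq_self {X Λ : Finset V} (h : X ⊆ Λ) {f k : {x // x ∈ Λ} → Fin D}
    (hfk : ∀ v : {x // x ∈ Λ}, v.1 ∉ X → f v = k v) : patch h f (res h k) = k := by
  funext v
  by_cases hv : v.1 ∈ X
  · simp [patch, hv, res]
  · simp [patch, hv, hfk v hv]

lemma incl_apply {X Λ : Finset V} (h : X ⊆ Λ) (M : Mat D X)
    (f g : {x // x ∈ Λ} → Fin D) :
    incl D h M f g =
      if ∀ v : {x // x ∈ Λ}, v.1 ∉ X → f v = g v then M (res h f) (res h g) else 0 := rfl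

/-- Entry formula for `incl M * A`. -/
lemma incl_mul_apply {X Λ : Finset V} (h : X ⊆ Λ) (M : Mat D X) (A : Mat D Λ)
    (f g : {x // x ∈ Λ} → Fin D) :
    (incl D h M * A) f g
      = ∑ b : {x // x ∈ X} → Fin D, M (res h f) b * A (patch h f b) g := by
  rw [Matrix.mul_apply]
  have step : ∀ k, incl D h M f k * A k g
      = ∑ b : {x // x ∈ X} → Fin D,
          if k = patch h f b then M (res h f) b * A k g else 0 := by
    intro k
    by_cases hk : ∀ v : {x // x ∈ Λ}, v.1 ∉ X → f v = k v
    · have h1 : ∀ b, (k = patch h f b) ↔ (b = res h k) := by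
        intro b
        constructor
        · rintro rfl; rw [res_patch]
        · rintro rfl; exact (patch_eq_self h hk).symm
      simp only [h1]
      rw [Finset.sum_ite_eq' Finset.univ (res h k)
        (fun b => M (res h f) b * A k g)]
      rw [incl_apply, if_pos hk, if_pos (Finset.mem_univ _)]
    · have h0 : incl D h M f k = 0 := if_neg hk
      rw [h0, zero_mul]
      refine (Finset.sum_eq_zero fun b _ => ?_).symm
      rw [if_neg]
      rintro rfl
      exact hk fun v hv => (patch_not_mem h f b hv).symm
  rw [Finset.sum_congr rfl fun k _ => step k, Finset.sum_comm]
  refine Finset.sum_congr rfl fun b _ => ?_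
  rw [Finset.sum_ite_eq' Finset.univ (patch h f b) (fun k => M (res h f) b * A k g)]
  simp

/-- Entry formula for `A * incl C`. -/
lemma mul_incl_apply {S Λ : Finset V} (h : S ⊆ Λ) (C : Mat D S) (A : Mat D Λ)
    (f g : {x // x ∈ Λ} → Fin D) :
    (A * incl D h C) f g
      = ∑ b : {x // x ∈ S} → Fin D, A f (patch h g b) * C b (res h g) := by
  rw [Matrix.mul_apply]
  have step : ∀ k, A f k * incl D h C k g
      = ∑ b : {x // x ∈ S} → Fin D,
          if k = patch h g b then A f k * C b (res h g) else 0 := by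
    intro k
    by_cases hk : ∀ v : {x // x ∈ Λ}, v.1 ∉ S → k v = g v
    · have h1 : ∀ b, (k = patch h g b) ↔ (b = res h k) := by
        intro b
        constructor
        · rintro rfl; rw [res_patch]
        · rintro rfl; exact (patch_eq_self h fun v hv => (hk v hv).symm).symm
      simp only [h1]
      rw [Finset.sum_ite_eq' Finset.univ (res h k)
        (fun b => A f k * C b (res h g))]
      rw [incl_apply, if_pos hk, if_pos (Finset.mem_univ _)]
    · have h0 : incl D h C k g = 0 := if_neg hk
      rw [h0, mul_zero]
      refine (Finset.sum_eq_zero fun b _ => ?_).symm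
      rw [if_neg]
      rintro rfl
      exact hk fun v hv => patch_not_mem h g b hv
  rw [Finset.sum_congr rfl fun k _ => step k, Finset.sum_comm]
  refine Finset.sum_congr rfl fun b _ => ?_
  rw [Finset.sum_ite_eq' Finset.univ (patch h g b) (fun k => A f k * C b (res h g))]
  simp

end DerivAux
namespace DerivAux

variable {V : Type*} [DecidableEq V] {D : ℕ}

lemma incl_add {X Λ : Finset V} (h : X ⊆ Λ) (M N : Mat D X) :
    incl D h (M + N) = incl D h M + incl D h N := by
  funext f g
  simp only [incl_apply, Matrix.add_apply]
  split <;> simp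

lemma incl_smul {X Λ : Finset V} (h : X ⊆ Λ) (c : ℂ) (M : Mat D X) :
    incl D h (c • M) = c • incl D h M := by
  funext f g
  simp only [incl_apply, Matrix.smul_apply]
  split <;> simp

lemma incl_zero {X Λ : Finset V} (h : X ⊆ Λ) :
    incl D h (0 : Mat D X) = 0 := by
  funext f g
  simp only [incl_apply, Matrix.zero_apply]
  split <;> simp

lemma incl_sub {X Λ : Finset V} (h : X ⊆ Λ) (M N : Mat D X) :
    incl D h (M - N) = incl D h M - incl D h N := by
  funext f g
  simp only [incl_apply, Matrix.sub_apply]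
  split <;> simp

lemma incl_one {X Λ : Finset V} (h : X ⊆ Λ) :
    incl D h (1 : Mat D X) = 1 := by
  funext f g
  simp only [incl_apply, Matrix.one_apply]
  by_cases hfg : f = g
  · subst hfg; simp
  · rw [if_neg hfg]
    by_cases hP : ∀ v : {x // x ∈ Λ}, v.1 ∉ X → f v = g v
    · rw [if_pos hP, if_neg]
      intro hres
      apply hfg
      funext v
      by_cases hv : v.1 ∈ X
      · exact congrFun hres ⟨v.1, hv⟩
      · exact hP v hv
    · rw [if_neg hP]

lemma incl_mul {X Λ : Finset V} (h : X ⊆ Λ) (M N : Mat D X) :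
    incl D h (M * N) = incl D h M * incl D h N := by
  funext f g
  rw [incl_mul_apply]
  by_cases hfg : ∀ v : {x // x ∈ Λ}, v.1 ∉ X → f v = g v
  · rw [incl_apply, if_pos hfg, Matrix.mul_apply]
    refine Finset.sum_congr rfl fun b _ => ?_
    rw [incl_apply, if_pos, res_patch]
    intro v hv
    rw [patch_not_mem h f b hv]
    exact hfg v hv
  · rw [incl_apply (D := D) h (M * N), if_neg hfg]
    refine (Finset.sum_eq_zero fun b _ => ?_).symm
    rw [incl_apply, if_neg, mul_zero]
    intro hc
    exact hfg fun v hv => (patch_not_mem h f b hv).symm.trans (hc v hv)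

lemma incl_star {X Λ : Finset V} (h : X ⊆ Λ) (M : Mat D X) :
    incl D h (star M) = star (incl D h M) := by
  funext f g
  rw [Matrix.star_apply]
  simp only [incl_apply, Matrix.star_apply]
  by_cases hfg : ∀ v : {x // x ∈ Λ}, v.1 ∉ X → f v = g v
  · rw [if_pos hfg, if_pos fun v hv => (hfg v hv).symm]
  · rw [if_neg hfg, if_neg fun hc => hfg fun v hv => (hc v hv).symm, star_zero]

lemma incl_trans {X Y Λ : Finset V} (h1 : X ⊆ Y) (h2 : Y ⊆ Λ) (M : Mat D X) :
    incl D h2 (incl D h1 M) = incl D (h1.trans h2) M := by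
  funext f g
  simp only [incl_apply]
  by_cases hfg : ∀ v : {x // x ∈ Λ}, v.1 ∉ X → f v = g v
  · rw [if_pos hfg, if_pos, if_pos]
    · rfl
    · intro w hw
      exact hfg ⟨w.1, h2 w.2⟩ hw
    · intro v hv
      exact hfg v fun hc => hv (h1 hc)
  · rw [if_neg hfg]
    by_cases hY : ∀ v : {x // x ∈ Λ}, v.1 ∉ Y → f v = g v
    · rw [if_pos hY, if_neg]
      intro hc
      apply hfg
      intro v hv
      by_cases hvY : v.1 ∈ Y
      · exact hc ⟨v.1, hvY⟩ hv
      · exact hY v hvY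
    · rw [if_neg hY]

end DerivAux
namespace DerivAux

variable {V : Type*} [DecidableEq V] {D : ℕ}

/-- Operators with disjoint supports commute. -/
lemma incl_comm_of_disjoint {X S Λ : Finset V} (hX : X ⊆ Λ) (hS : S ⊆ Λ)
    (hd : Disjoint X S) (M : Mat D X) (C : Mat D S) :
    incl D hX M * incl D hS C = incl D hS C * incl D hX M := by
  funext f g
  rw [incl_mul_apply, mul_incl_apply]
  have hXS : ∀ v : V, v ∈ X → v ∉ S := fun v hv => Finset.disjoint_left.mp hd hv
  have hSX : ∀ v : V, v ∈ S → v ∉ X := fun v hv => Finset.disjoint_right.mp hd hv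
  set P : Prop := ∀ v : {x // x ∈ Λ}, v.1 ∉ X → v.1 ∉ S → f v = g v with hP
  have lhs_eq : ∑ b : {x // x ∈ X} → Fin D, M (res hX f) b * incl D hS C (patch hX f b) g
      = if P then M (res hX f) (res hX g) * C (res hS f) (res hS g) else 0 := by
    have key : ∀ b, M (res hX f) b * incl D hS C (patch hX f b) g
        = if b = res hX g ∧ P then M (res hX f) b * C (res hS f) (res hS g) else 0 := by
      intro b
      rw [incl_apply]
      have hres : res hS (patch hX f b) = res hS f := by
        funext w
        exact patch_not_mem hX f b (hSX w.1 w.2)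
      by_cases hc : ∀ v : {x // x ∈ Λ}, v.1 ∉ S → patch hX f b v = g v
      · have hb : b = res hX g := by
          funext w
          have := hc ⟨w.1, hX w.2⟩ (hXS w.1 w.2)
          rwa [patch_mem hX f b w.2] at this
        have hp : P := by
          intro v hvX hvS
          have := hc v hvS
          rwa [patch_not_mem hX f b hvX] at this
        rw [if_pos hc, if_pos ⟨hb, hp⟩, hres]
      · rw [if_neg hc, mul_zero, if_neg]
        rintro ⟨hb, hp⟩
        apply hc
        intro v hvS
        by_cases hvX : v.1 ∈ X
        · rw [patch_mem hX f b hvX, hb]; rfl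
        · rw [patch_not_mem hX f b hvX]; exact hp v hvX hvS
    rw [Finset.sum_congr rfl fun b _ => key b]
    by_cases hp : P
    · simp only [iff_true_intro hp, and_true, if_pos hp]
      rw [Finset.sum_ite_eq' Finset.univ (res hX g)
        (fun b => M (res hX f) b * C (res hS f) (res hS g))]
      simp
    · simp only [iff_false_intro hp, and_false, if_false, Finset.sum_const_zero]
  have rhs_eq : ∑ b : {x // x ∈ X} → Fin D, incl D hS C f (patch hX g b) * M b (res hX g)
      = if P then M (res hX f) (res hX g) * C (res hS f) (res hS g) else 0 := by
    have key : ∀ b, incl D hS C f (patch hX g b) * M b (res hX g)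
        = if b = res hX f ∧ P then M (res hX f) (res hX g) * C (res hS f) (res hS g) else 0 := by
      intro b
      rw [incl_apply]
      have hres : res hS (patch hX g b) = res hS g := by
        funext w
        exact patch_not_mem hX g b (hSX w.1 w.2)
      by_cases hc : ∀ v : {x // x ∈ Λ}, v.1 ∉ S → f v = patch hX g b v
      · have hb : b = res hX f := by
          funext w
          have := hc ⟨w.1, hX w.2⟩ (hXS w.1 w.2)
          rw [patch_mem hX g b w.2] at this
          exact this.symm
        have hp : P := by
          intro v hvX hvS
          have := hc v hvS
          rwa [patch_not_mem hX g b hvX] at this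
        rw [if_pos hc, if_pos ⟨hb, hp⟩, hres, hb]
        exact mul_comm _ _
      · rw [if_neg hc, zero_mul, if_neg]
        rintro ⟨hb, hp⟩
        apply hc
        intro v hvS
        by_cases hvX : v.1 ∈ X
        · rw [patch_mem hX g b hvX, hb]; rfl
        · rw [patch_not_mem hX g b hvX]
          exact hp v hvX hvS
    rw [Finset.sum_congr rfl fun b _ => key b]
    by_cases hp : P
    · simp only [iff_true_intro hp, and_true, if_pos hp]
      rw [Finset.sum_ite_eq' Finset.univ (res hX f)
        (fun b => M (res hX f) (res hX g) * C (res hS f) (res hS g))]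
      simp
    · simp only [iff_false_intro hp, and_false, if_false, Finset.sum_const_zero]
  rw [lhs_eq, rhs_eq]

/-- The product of two locally supported operators is supported in any common enlargement. -/
lemma incl_mul_incl_subset {X S T Λ : Finset V} (hX : X ⊆ Λ) (hS : S ⊆ Λ)
    (hXT : X ⊆ T) (hST : S ⊆ T) (hT : T ⊆ Λ) (M : Mat D X) (C : Mat D S) :
    incl D hX M * incl D hS C = incl D hT (incl D hXT M * incl D hST C) := by
  funext f g
  rw [incl_mul_apply, incl_apply]
  set P : Prop := ∀ v : {x // x ∈ Λ}, v.1 ∉ T → f v = g v with hPdef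
  have key : ∀ b, M (res hX f) b * incl D hS C (patch hX f b) g
      = if P then M (res hX f) b *
          incl D hST C (patch hXT (res hT f) b) (res hT g) else 0 := by
    intro b
    rw [incl_apply, incl_apply]
    have hres1 : res hST (patch hXT (res hT f) b) = res hS (patch hX f b) := by
      funext w
      by_cases hw : w.1 ∈ X
      · rw [show (res hST (patch hXT (res hT f) b)) w = patch hXT (res hT f) b ⟨w.1, hST w.2⟩
          from rfl, patch_mem hXT (res hT f) b hw,
          show (res hS (patch hX f b)) w = patch hX f b ⟨w.1, hS w.2⟩ from rfl,
          patch_mem hX f b hw]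
      · rw [show (res hST (patch hXT (res hT f) b)) w = patch hXT (res hT f) b ⟨w.1, hST w.2⟩
          from rfl, patch_not_mem hXT (res hT f) b hw,
          show (res hS (patch hX f b)) w = patch hX f b ⟨w.1, hS w.2⟩ from rfl,
          patch_not_mem hX f b hw]
        rfl
    have hres2 : res hST (res hT g) = res hS g := rfl
    have hcond : (∀ v : {x // x ∈ Λ}, v.1 ∉ S → patch hX f b v = g v)
        ↔ (P ∧ ∀ w : {x // x ∈ T}, w.1 ∉ S →
            patch hXT (res hT f) b w = (res hT g) w) := by
      constructor
      · intro hc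
        constructor
        · intro v hvT
          have hvX : v.1 ∉ X := fun hvx => hvT (hXT hvx)
          have hvS : v.1 ∉ S := fun hvs => hvT (hST hvs)
          have := hc v hvS
          rwa [patch_not_mem hX f b hvX] at this
        · intro w hwS
          have := hc ⟨w.1, hT w.2⟩ hwS
          by_cases hw : w.1 ∈ X
          · rw [patch_mem hX f b hw] at this
            rw [patch_mem hXT (res hT f) b hw]
            exact this
          · rw [patch_not_mem hX f b hw] at this
            rw [patch_not_mem hXT (res hT f) b hw]
            exact this
      · rintro ⟨hp, hc⟩ v hvS
        by_cases hvT : v.1 ∈ T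
        · have := hc ⟨v.1, hvT⟩ hvS
          by_cases hw : v.1 ∈ X
          · rw [patch_mem hXT (res hT f) b hw] at this
            rw [patch_mem hX f b hw]
            exact this
          · rw [patch_not_mem hXT (res hT f) b hw] at this
            rw [patch_not_mem hX f b hw]
            exact this
        · have hvX : v.1 ∉ X := fun hvx => hvT (hXT hvx)
          rw [patch_not_mem hX f b hvX]
          exact hp v hvT
    by_cases hc : ∀ v : {x // x ∈ Λ}, v.1 ∉ S → patch hX f b v = g v
    · obtain ⟨hp, hc'⟩ := hcond.mp hc
      rw [if_pos hc, if_pos hp, if_pos hc', hres1, hres2]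
    · rw [if_neg hc]
      by_cases hp : P
      · rw [if_pos hp, if_neg, mul_zero]
        intro hc'
        exact hc (hcond.mpr ⟨hp, hc'⟩)
      · rw [if_neg hp, mul_zero]
  rw [Finset.sum_congr rfl fun b _ => key b]
  by_cases hp : P
  · simp only [if_pos hp]
    rw [incl_mul_apply]
    exact (if_pos hp).symm
  · simp only [if_neg hp, Finset.sum_const_zero]
    exact (if_neg hp).symm

end DerivAux
namespace DerivAux

noncomputable instance matCStarAlgebra {n : Type*} [Fintype n] [DecidableEq n] :
    CStarAlgebra (Matrix n n ℂ) := Matrix.instCStarAlgebra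

variable {V : Type*} [DecidableEq V] {D : ℕ}

/-- `incl` as a star-algebra homomorphism. -/
def inclHom (D : ℕ) {X Λ : Finset V} (h : X ⊆ Λ) : Mat D X →⋆ₐ[ℂ] Mat D Λ where
  toFun := incl D h
  map_one' := incl_one h
  map_mul' := incl_mul h
  map_zero' := incl_zero h
  map_add' := incl_add h
  commutes' := fun c => by
    show incl D h (algebraMap ℂ (Mat D X) c) = algebraMap ℂ (Mat D Λ) c
    rw [Algebra.algebraMap_eq_smul_one, Algebra.algebraMap_eq_smul_one,
      incl_smul, incl_one]
  map_star' := incl_star h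

lemma norm_incl_le {X Λ : Finset V} (h : X ⊆ Λ) (M : Mat D X) :
    ‖incl D h M‖ ≤ ‖M‖ :=
  NonUnitalStarAlgHom.norm_apply_le (inclHom D h) M

end DerivAux
namespace DerivAux

lemma exp_one_mul_le (y : ℝ) : Real.exp 1 * y ≤ Real.exp y := by
  have h : y ≤ Real.exp (y - 1) := by
    have := Real.add_one_le_exp (y - 1)
    linarith
  calc Real.exp 1 * y ≤ Real.exp 1 * Real.exp (y - 1) :=
        mul_le_mul_of_nonneg_left h (Real.exp_pos 1).le
    _ = Real.exp y := by rw [← Real.exp_add]; ring_nf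

lemma le_exp_div (ε x : ℝ) (hε : 0 < ε) : x ≤ Real.exp (ε * x) / (Real.exp 1 * ε) := by
  rw [le_div_iff₀ (by positivity)]
  calc x * (Real.exp 1 * ε) = Real.exp 1 * (ε * x) := by ring
    _ ≤ Real.exp (ε * x) := exp_one_mul_le _

lemma pow_div_exp_le_factorial (m : ℕ) :
    ((m : ℝ) / Real.exp 1) ^ m ≤ (m.factorial : ℝ) := by
  have h1 : ((m : ℝ)) ^ m / (m.factorial : ℝ) ≤ Real.exp m := by
    refine le_trans ?_ (Real.sum_le_exp_of_nonneg (Nat.cast_nonneg m) (m + 1))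
    exact Finset.single_le_sum (f := fun i => (m : ℝ) ^ i / (i.factorial : ℝ))
      (fun i _ => by positivity) (Finset.self_mem_range_succ m)
  have hfac : (0 : ℝ) < (m.factorial : ℝ) := by exact_mod_cast m.factorial_pos
  have hexp : (0 : ℝ) < Real.exp m := Real.exp_pos _
  rw [div_le_iff₀ hfac] at h1
  rw [div_pow, Real.exp_one_pow, div_le_iff₀ hexp]
  linarith

variable {V : Type*} [DecidableEq V] {D : ℕ}

lemma site_sum_le (D : ℕ) (dd : Finset V → ℝ) (hdd : ∀ X : Finset V, 0 ≤ dd X)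
    (Φ : ∀ X : Finset V, Mat D X) (lam mu : ℝ) (hmu : 0 ≤ mu)
    (hfin : intNormE D dd Φ lam mu ≠ ⊤) (x : V) (F : Finset (Finset V))
    (hF : ∀ X ∈ F, x ∈ X) :
    ∑ X ∈ F, ‖Φ X‖ * Real.exp (lam * X.card) ≤ (intNormE D dd Φ lam mu).toReal := by
  set E := intNormE D dd Φ lam mu with hE
  set g : {X : Finset V // x ∈ X} → ℝ≥0∞ := fun X =>
    (‖Φ X.1‖₊ : ℝ≥0∞) * ENNReal.ofReal (Real.exp (lam * X.1.card + mu * dd X.1)) with hg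
  have key : ∑ X ∈ F, ((‖Φ X‖₊ : ℝ≥0∞) * ENNReal.ofReal (Real.exp (lam * X.card))) ≤ E := by
    have step1 : ∑ X ∈ F, ((‖Φ X‖₊ : ℝ≥0∞) * ENNReal.ofReal (Real.exp (lam * X.card)))
        ≤ ∑ X ∈ F.attach, g ⟨X.1, hF X.1 X.2⟩ := by
      rw [← Finset.sum_attach F (fun X => ((‖Φ X‖₊ : ℝ≥0∞) * ENNReal.ofReal (Real.exp (lam * X.card))))]
      refine Finset.sum_le_sum fun X _ => ?_
      refine mul_le_mul_right (ENNReal.ofReal_le_ofReal (Real.exp_le_exp.mpr ?_)) _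
      have : 0 ≤ mu * dd X.1 := mul_nonneg hmu (hdd X.1)
      linarith
    have step2 : ∑ X ∈ F.attach, g ⟨X.1, hF X.1 X.2⟩
        ≤ ∑' X : {X : Finset V // x ∈ X}, g X := by
      set emb : {X : Finset V // X ∈ F} ↪ {X : Finset V // x ∈ X} :=
        ⟨fun X => ⟨X.1, hF X.1 X.2⟩, fun a b hab => Subtype.ext (Subtype.mk_eq_mk.mp hab)⟩
      have : ∑ X ∈ F.attach, g ⟨X.1, hF X.1 X.2⟩ = ∑ Y ∈ F.attach.map emb, g Y := by
        rw [Finset.sum_map]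
        rfl
      rw [this]
      exact ENNReal.sum_le_tsum _
    refine le_trans (le_trans step1 step2) ?_
    rw [hg, hE]
    unfold intNormE
    exact le_iSup (fun x' : V => ∑' X : {X : Finset V // x' ∈ X},
      (‖Φ X.1‖₊ : ℝ≥0∞) * ENNReal.ofReal (Real.exp (lam * X.1.card + mu * dd X.1))) x
  have hne : ∀ X ∈ F, ((‖Φ X‖₊ : ℝ≥0∞) * ENNReal.ofReal (Real.exp (lam * X.card))) ≠ ⊤ := by
    intro X _
    exact ENNReal.mul_ne_top ENNReal.coe_ne_top ENNReal.ofReal_ne_top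
  have hsum : (∑ X ∈ F, ((‖Φ X‖₊ : ℝ≥0∞) * ENNReal.ofReal (Real.exp (lam * X.card)))).toReal
      = ∑ X ∈ F, ‖Φ X‖ * Real.exp (lam * X.card) := by
    rw [ENNReal.toReal_sum hne]
    refine Finset.sum_congr rfl fun X _ => ?_
    rw [ENNReal.toReal_mul, ENNReal.coe_toReal, ENNReal.toReal_ofReal (Real.exp_pos _).le]
    rfl
  rw [← hsum]
  exact ENNReal.toReal_mono hfin key

lemma touch_sum_le (D : ℕ) (dd : Finset V → ℝ) (hdd : ∀ X : Finset V, 0 ≤ dd X)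
    (Φ : ∀ X : Finset V, Mat D X) (lam mu : ℝ) (hmu : 0 ≤ mu)
    (hfin : intNormE D dd Φ lam mu ≠ ⊤) (Y S : Finset V) :
    ∑ X ∈ Y.powerset, (if (X ∩ S).Nonempty then ‖Φ X‖ * Real.exp (lam * X.card) else 0)
      ≤ S.card * (intNormE D dd Φ lam mu).toReal := by
  have hterm : ∀ X : Finset V, 0 ≤ ‖Φ X‖ * Real.exp (lam * X.card) :=
    fun X => mul_nonneg (norm_nonneg _) (Real.exp_pos _).le
  have h1 : ∀ X ∈ Y.powerset,
      (if (X ∩ S).Nonempty then ‖Φ X‖ * Real.exp (lam * X.card) else 0)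
        ≤ ∑ x ∈ S, (if x ∈ X then ‖Φ X‖ * Real.exp (lam * X.card) else 0) := by
    intro X _
    by_cases hne : (X ∩ S).Nonempty
    · obtain ⟨x0, hx0⟩ := hne
      obtain ⟨hx0X, hx0S⟩ := Finset.mem_inter.mp hx0
      rw [if_pos ⟨x0, hx0⟩]
      calc ‖Φ X‖ * Real.exp (lam * X.card)
          = (if x0 ∈ X then ‖Φ X‖ * Real.exp (lam * X.card) else 0) := by rw [if_pos hx0X]
        _ ≤ ∑ x ∈ S, (if x ∈ X then ‖Φ X‖ * Real.exp (lam * X.card) else 0) :=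
            Finset.single_le_sum (f := fun x => if x ∈ X then ‖Φ X‖ * Real.exp (lam * X.card) else 0)
              (fun x _ => by by_cases h : x ∈ X <;> simp [h, hterm X]) hx0S
    · rw [if_neg hne]
      exact Finset.sum_nonneg fun x _ => by by_cases h : x ∈ X <;> simp [h, hterm X]
  calc ∑ X ∈ Y.powerset, (if (X ∩ S).Nonempty then ‖Φ X‖ * Real.exp (lam * X.card) else 0)
      ≤ ∑ X ∈ Y.powerset, ∑ x ∈ S, (if x ∈ X then ‖Φ X‖ * Real.exp (lam * X.card) else 0) :=
        Finset.sum_le_sum h1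
    _ = ∑ x ∈ S, ∑ X ∈ Y.powerset, (if x ∈ X then ‖Φ X‖ * Real.exp (lam * X.card) else 0) :=
        Finset.sum_comm
    _ ≤ ∑ _x ∈ S, (intNormE D dd Φ lam mu).toReal := by
        refine Finset.sum_le_sum fun x _ => ?_
        rw [← Finset.sum_filter]
        exact site_sum_le D dd hdd Φ lam mu hmu hfin x _ (fun X hX => (Finset.mem_filter.mp hX).2)
    _ = S.card * (intNormE D dd Φ lam mu).toReal := by
        rw [Finset.sum_const, nsmul_eq_mul]

end DerivAux
namespace DerivAux

variable {V : Type*} [DecidableEq V]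

lemma key_induction (D : ℕ) (Φ : ∀ X : Finset V, Mat D X) (lam : ℝ) (hlam : 0 < lam)
    (N : ℝ) (hN : 0 ≤ N) (Y Λ : Finset V) (hY : Y ⊆ Λ)
    (hbound : ∀ S : Finset V,
      ∑ X ∈ Y.powerset, (if (X ∩ S).Nonempty then ‖Φ X‖ * Real.exp (lam * X.card) else 0)
        ≤ S.card * N)
    (δE : Module.End ℂ (Mat D Λ))
    (hδE : ∀ M : Mat D Λ, δE M
      = Complex.I • (incl D hY (ham D Φ Y) * M - M * incl D hY (ham D Φ Y)))
    (m : ℕ) (hm : 0 < m) :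
    ∀ k, k ≤ m → ∀ (S : Finset V) (hS : S ⊆ Λ) (B : Mat D S),
      ‖(δE ^ k) (incl D hS B)‖
        ≤ ‖B‖ * (2 * N * m / (Real.exp 1 * lam)) ^ k
            * Real.exp (lam * k / m * S.card) := by
  have hmR : (0 : ℝ) < (m : ℝ) := by exact_mod_cast hm
  set R : ℝ := 2 * N * m / (Real.exp 1 * lam) with hRdef
  have hR : 0 ≤ R := by
    apply div_nonneg
    · have : (0:ℝ) ≤ 2 * N := by linarith
      exact mul_nonneg this (Nat.cast_nonneg m)
    · positivity
  -- the expansion of the Hamiltonian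
  have hH : incl D hY (ham D Φ Y) = ∑ X ∈ Y.powerset.attach,
      incl D ((Finset.mem_powerset.mp X.2).trans hY) (Φ X.1) := by
    rw [ham]
    rw [show incl D hY (∑ X ∈ Y.powerset.attach, incl D (Finset.mem_powerset.mp X.2) (Φ X.1))
        = ∑ X ∈ Y.powerset.attach, incl D hY (incl D (Finset.mem_powerset.mp X.2) (Φ X.1))
      from map_sum (inclHom D hY) _ _]
    exact Finset.sum_congr rfl fun X _ => incl_trans _ _ _
  intro k
  induction k with
  | zero =>
    intro _ S hS B
    simpa using norm_incl_le hS B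
  | succ k ih =>
    intro hk1 S hS B
    have hk : k ≤ m := Nat.le_of_succ_le hk1
    have hRk : 0 ≤ R ^ k := pow_nonneg hR k
    set c : ℝ := ‖B‖ * R ^ k * Real.exp (lam * k / m * S.card) with hcdef
    have hc : 0 ≤ c := by positivity
    have hTX : ∀ X : {x // x ∈ Y.powerset}, X.1 ⊆ Λ :=
      fun X => (Finset.mem_powerset.mp X.2).trans hY
    have hTs : ∀ X : {x // x ∈ Y.powerset}, X.1 ∪ S ⊆ Λ :=
      fun X => Finset.union_subset (hTX X) hS
    set cX : ∀ X : {x // x ∈ Y.powerset}, Mat D (X.1 ∪ S) := fun X =>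
      Complex.I • (incl D Finset.subset_union_left (Φ X.1) *
          incl D Finset.subset_union_right B
        - incl D Finset.subset_union_right B *
          incl D Finset.subset_union_left (Φ X.1)) with hcXdef
    have hδ : δE (incl D hS B) = ∑ X ∈ Y.powerset.attach,
        incl D (hTs X) (cX X) := by
      rw [hδE, hH, Finset.sum_mul, Finset.mul_sum, ← Finset.sum_sub_distrib,
        Finset.smul_sum]
      refine Finset.sum_congr rfl fun X _ => ?_
      rw [incl_mul_incl_subset (hTX X) hS Finset.subset_union_left
          Finset.subset_union_right (hTs X) (Φ X.1) B,
        incl_mul_incl_subset hS (hTX X) Finset.subset_union_right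
          Finset.subset_union_left (hTs X) B (Φ X.1),
        ← incl_sub, ← incl_smul]
    have hterm : ∀ X : {x // x ∈ Y.powerset}, ‖cX X‖ ≤ 2 * ‖Φ X.1‖ * ‖B‖ := by
      intro X
      calc ‖Complex.I • (incl D Finset.subset_union_left (Φ X.1) *
              incl D Finset.subset_union_right B
            - incl D Finset.subset_union_right B *
              incl D Finset.subset_union_left (Φ X.1))‖
          = ‖incl D Finset.subset_union_left (Φ X.1) *
              incl D Finset.subset_union_right B
            - incl D Finset.subset_union_right B *
              incl D Finset.subset_union_left (Φ X.1)‖ := by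
            rw [norm_smul, Complex.norm_I, one_mul]
        _ ≤ ‖incl D Finset.subset_union_left (Φ X.1) *
              incl D Finset.subset_union_right B‖
            + ‖incl D Finset.subset_union_right B *
              incl D Finset.subset_union_left (Φ X.1)‖ := norm_sub_le _ _
        _ ≤ 2 * ‖Φ X.1‖ * ‖B‖ := by
            have h1 : ‖incl D (Finset.subset_union_left : X.1 ⊆ X.1 ∪ S) (Φ X.1) *
                incl D (Finset.subset_union_right : S ⊆ X.1 ∪ S) B‖ ≤ ‖Φ X.1‖ * ‖B‖ := by
              calc _ ≤ ‖incl D (Finset.subset_union_left : X.1 ⊆ X.1 ∪ S) (Φ X.1)‖ *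
                    ‖incl D (Finset.subset_union_right : S ⊆ X.1 ∪ S) B‖ := norm_mul_le _ _
                _ ≤ ‖Φ X.1‖ * ‖B‖ :=
                    mul_le_mul (norm_incl_le _ _) (norm_incl_le _ _)
                      (norm_nonneg _) (norm_nonneg _)
            have h2 : ‖incl D (Finset.subset_union_right : S ⊆ X.1 ∪ S) B *
                incl D (Finset.subset_union_left : X.1 ⊆ X.1 ∪ S) (Φ X.1)‖
                  ≤ ‖B‖ * ‖Φ X.1‖ := by
              calc _ ≤ ‖incl D (Finset.subset_union_right : S ⊆ X.1 ∪ S) B‖ *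
                    ‖incl D (Finset.subset_union_left : X.1 ⊆ X.1 ∪ S) (Φ X.1)‖ :=
                    norm_mul_le _ _
                _ ≤ ‖B‖ * ‖Φ X.1‖ :=
                    mul_le_mul (norm_incl_le _ _) (norm_incl_le _ _)
                      (norm_nonneg _) (norm_nonneg _)
            nlinarith [h1, h2]
    have hper : ∀ X ∈ Y.powerset.attach, ‖(δE ^ k) (incl D (hTs X) (cX X))‖
        ≤ (if (X.1 ∩ S).Nonempty then 2 * ‖Φ X.1‖ * Real.exp (lam * X.1.card) else 0) * c := by
      intro X _
      by_cases hd : Disjoint X.1 S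
      · have hzero : cX X = 0 := by
          show Complex.I • (incl D Finset.subset_union_left (Φ X.1) *
              incl D Finset.subset_union_right B
            - incl D Finset.subset_union_right B *
              incl D Finset.subset_union_left (Φ X.1)) = 0
          rw [incl_comm_of_disjoint Finset.subset_union_left Finset.subset_union_right hd
            (Φ X.1) B]
          simp
        rw [hzero, incl_zero, map_zero, norm_zero, if_neg, zero_mul]
        exact Finset.not_nonempty_iff_eq_empty.mpr (Finset.disjoint_iff_inter_eq_empty.mp hd)
      · have hne : (X.1 ∩ S).Nonempty := Finset.not_disjoint_iff_nonempty_inter.mp hd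
        rw [if_pos hne]
        have hcard : ((X.1 ∪ S).card : ℝ) ≤ (X.1.card : ℝ) + (S.card : ℝ) := by
          exact_mod_cast Finset.card_union_le X.1 S
        have ha : 0 ≤ lam * k / m := by positivity
        have hb : lam * k / m ≤ lam := by
          rw [div_le_iff₀ hmR]
          calc lam * k ≤ lam * m := by
                have : (k : ℝ) ≤ (m : ℝ) := by exact_mod_cast hk
                exact mul_le_mul_of_nonneg_left this hlam.le
            _ = lam * m := rfl
        have hexp : lam * k / m * ((X.1 ∪ S).card : ℝ)
            ≤ lam * X.1.card + lam * k / m * S.card := by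
          calc lam * k / m * ((X.1 ∪ S).card : ℝ)
              ≤ lam * k / m * ((X.1.card : ℝ) + S.card) :=
                mul_le_mul_of_nonneg_left hcard ha
            _ = lam * k / m * X.1.card + lam * k / m * S.card := by ring
            _ ≤ lam * X.1.card + lam * k / m * S.card := by
                have := mul_le_mul_of_nonneg_right hb
                  (Nat.cast_nonneg X.1.card : (0:ℝ) ≤ (X.1.card : ℝ))
                linarith
        calc ‖(δE ^ k) (incl D (hTs X) (cX X))‖
            ≤ ‖cX X‖ * R ^ k * Real.exp (lam * k / m * ((X.1 ∪ S).card : ℝ)) :=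
              ih hk (X.1 ∪ S) (hTs X) (cX X)
          _ ≤ (2 * ‖Φ X.1‖ * ‖B‖) * R ^ k
                * Real.exp (lam * k / m * ((X.1 ∪ S).card : ℝ)) :=
              mul_le_mul_of_nonneg_right
                (mul_le_mul_of_nonneg_right (hterm X) hRk) (Real.exp_pos _).le
          _ ≤ (2 * ‖Φ X.1‖ * ‖B‖) * R ^ k
                * (Real.exp (lam * X.1.card) * Real.exp (lam * k / m * S.card)) := by
              apply mul_le_mul_of_nonneg_left
              · rw [← Real.exp_add]
                exact Real.exp_le_exp.mpr hexp
              · have h2B : (0:ℝ) ≤ 2 * ‖Φ X.1‖ * ‖B‖ := by positivity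
                exact mul_nonneg h2B hRk
          _ = (2 * ‖Φ X.1‖ * Real.exp (lam * X.1.card)) * c := by
              rw [hcdef]; ring
    -- put everything together
    have hmain : ‖(δE ^ (k+1)) (incl D hS B)‖
        ≤ 2 * (S.card * N) * c := by
      calc ‖(δE ^ (k+1)) (incl D hS B)‖
          = ‖(δE ^ k) (δE (incl D hS B))‖ := by
            rw [pow_succ, Module.End.mul_apply]
        _ = ‖∑ X ∈ Y.powerset.attach, (δE ^ k) (incl D (hTs X) (cX X))‖ := by
            rw [hδ, map_sum]
        _ ≤ ∑ X ∈ Y.powerset.attach, ‖(δE ^ k) (incl D (hTs X) (cX X))‖ :=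
            norm_sum_le _ _
        _ ≤ ∑ X ∈ Y.powerset.attach,
              (if (X.1 ∩ S).Nonempty then 2 * ‖Φ X.1‖ * Real.exp (lam * X.1.card) else 0) * c :=
            Finset.sum_le_sum hper
        _ = 2 * (∑ X ∈ Y.powerset,
              (if (X ∩ S).Nonempty then ‖Φ X‖ * Real.exp (lam * X.card) else 0)) * c := by
            have hsplit : ∀ X ∈ Y.powerset.attach,
                (if (X.1 ∩ S).Nonempty then 2 * ‖Φ X.1‖ * Real.exp (lam * X.1.card) else 0) * c
                = 2 * (((if (X.1 ∩ S).Nonempty then ‖Φ X.1‖ * Real.exp (lam * X.1.card) else 0)) * c) := by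
              intro X _
              split <;> ring
            rw [Finset.sum_congr rfl hsplit, ← Finset.mul_sum,
              Finset.sum_attach Y.powerset
                (fun X => (if (X ∩ S).Nonempty then ‖Φ X‖ * Real.exp (lam * X.card) else 0) * c),
              ← Finset.sum_mul, mul_assoc]
        _ ≤ 2 * (S.card * N) * c := by
            have := hbound S
            have h2 : (0:ℝ) ≤ 2 := by norm_num
            exact mul_le_mul_of_nonneg_right (mul_le_mul_of_nonneg_left this h2) hc
    refine hmain.trans ?_
    -- final arithmetic step
    have hεpos : 0 < lam / (m : ℝ) := div_pos hlam hmR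
    have h1 := le_exp_div (lam / m) (S.card : ℝ) hεpos
    have key2 : 2 * N * (S.card : ℝ) * Real.exp (lam * k / m * S.card)
        ≤ R * Real.exp (lam * (k+1) / m * S.card) := by
      have e1 : Real.exp (lam * ((k : ℝ)+1) / m * S.card)
          = Real.exp (lam / m * S.card) * Real.exp (lam * k / m * S.card) := by
        rw [← Real.exp_add]
        congr 1
        field_simp
        ring
      have h2 : 2 * N * (S.card : ℝ)
          ≤ 2 * N * (Real.exp (lam / m * (S.card : ℝ)) / (Real.exp 1 * (lam / m))) := by
        apply mul_le_mul_of_nonneg_left h1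
        linarith
      have e2 : 2 * N * (Real.exp (lam / m * (S.card : ℝ)) / (Real.exp 1 * (lam / m)))
          = R * Real.exp (lam / m * (S.card : ℝ)) := by
        rw [hRdef]
        field_simp
      calc 2 * N * (S.card : ℝ) * Real.exp (lam * k / m * S.card)
          ≤ (2 * N * (Real.exp (lam / m * (S.card : ℝ)) / (Real.exp 1 * (lam / m))))
              * Real.exp (lam * k / m * S.card) :=
            mul_le_mul_of_nonneg_right h2 (Real.exp_pos _).le
        _ = R * (Real.exp (lam / m * (S.card : ℝ)) * Real.exp (lam * k / m * S.card)) := by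
            rw [e2]; ring
        _ = R * Real.exp (lam * ((k : ℝ)+1) / m * S.card) := by rw [e1]
        _ = R * Real.exp (lam * (k+1) / m * S.card) := by norm_num
    have hBRk : (0:ℝ) ≤ ‖B‖ * R ^ k := mul_nonneg (norm_nonneg _) hRk
    calc 2 * ((S.card : ℝ) * N) * c
        = (2 * N * (S.card : ℝ) * Real.exp (lam * k / m * S.card)) * (‖B‖ * R ^ k) := by
          rw [hcdef]; ring
      _ ≤ (R * Real.exp (lam * (k+1) / m * S.card)) * (‖B‖ * R ^ k) :=
          mul_le_mul_of_nonneg_right key2 hBRk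
      _ = ‖B‖ * R ^ (k+1) * Real.exp (lam * (k+1) / m * S.card) := by
          rw [pow_succ]; ring
      _ = ‖B‖ * R ^ (k+1) * Real.exp (lam * ((k+1 : ℕ) : ℝ) / m * S.card) := by
          norm_num

end DerivAux

open DerivAux

/-- (Eq. (2.9).) Let `Φ` be a local interaction on `V` with
`‖Φ‖ = ‖Φ‖_{λ,μ} < ∞` for `λ > 0, μ ≥ 0`, `Q` an observable supported in a finite
`Z ⊆ V`, and `Y ⊆ V` finite. With `δ_{H_Y}(Q) = i[H_Y, Q]`, for every `m ∈ ℕ`: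
`‖δ^m_{H_Y}(Q)‖ ≤ (2‖Φ‖/λ)^m ‖Q‖ e^{λ|Z|} m!` (all operators realized in `𝔄_{Z∪Y}`). -/
theorem derivation_power_bound
    {V : Type*} [DecidableEq V] [MetricSpace V] (D : ℕ)
    (Φ : ∀ X : Finset V, Mat D X) (hherm : ∀ X, (Φ X).IsHermitian)
    (lam mu : ℝ) (hlam : 0 < lam) (hmu : 0 ≤ mu)
    (hfin : intNormE D (fun X : Finset V => Metric.diam (X : Set V)) Φ lam mu ≠ ⊤)
    (Z : Finset V) (Q : Mat D Z) (Y : Finset V) (m : ℕ) :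
    ‖(fun M : Mat D (Z ∪ Y) =>
          Complex.I • (incl D Finset.subset_union_right (ham D Φ Y) * M -
            M * incl D Finset.subset_union_right (ham D Φ Y)))^[m]
        (incl D Finset.subset_union_left Q)‖ ≤
      (2 * (intNormE D (fun X : Finset V => Metric.diam (X : Set V)) Φ lam mu).toReal / lam) ^ m *
        ‖Q‖ * Real.exp (lam * Z.card) * m.factorial := by
  classical
  set N : ℝ := (intNormE D (fun X : Finset V => Metric.diam (X : Set V)) Φ lam mu).toReal
    with hN_def
  have hN : 0 ≤ N := ENNReal.toReal_nonneg
  rcases Nat.eq_zero_or_pos m with hm | hm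
  · subst hm
    simp only [Function.iterate_zero, id_eq, pow_zero, Nat.factorial_zero, Nat.cast_one,
      one_mul, mul_one]
    calc ‖incl D Finset.subset_union_left Q‖ ≤ ‖Q‖ := norm_incl_le _ _
      _ ≤ ‖Q‖ * Real.exp (lam * Z.card) :=
          le_mul_of_one_le_right (norm_nonneg _)
            (Real.one_le_exp (mul_nonneg hlam.le (Nat.cast_nonneg _)))
  · set δE : Module.End ℂ (Mat D (Z ∪ Y)) :=
      Complex.I • (LinearMap.mulLeft ℂ (incl D Finset.subset_union_right (ham D Φ Y))
        - LinearMap.mulRight ℂ (incl D Finset.subset_union_right (ham D Φ Y))) with hδdef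
    have hfun : (fun M : Mat D (Z ∪ Y) =>
        Complex.I • (incl D Finset.subset_union_right (ham D Φ Y) * M -
          M * incl D Finset.subset_union_right (ham D Φ Y))) = ⇑δE := by
      funext M
      simp [hδdef, LinearMap.smul_apply, LinearMap.sub_apply, LinearMap.mulLeft_apply,
        LinearMap.mulRight_apply]
    rw [hfun, ← Module.End.pow_apply]
    have hδE : ∀ M : Mat D (Z ∪ Y), δE M
        = Complex.I • (incl D Finset.subset_union_right (ham D Φ Y) * M -
            M * incl D Finset.subset_union_right (ham D Φ Y)) := by
      intro M
      simp [hδdef, LinearMap.smul_apply, LinearMap.sub_apply, LinearMap.mulLeft_apply,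
        LinearMap.mulRight_apply]
    have hbound : ∀ S : Finset V,
        ∑ X ∈ Y.powerset, (if (X ∩ S).Nonempty then ‖Φ X‖ * Real.exp (lam * X.card) else 0)
          ≤ S.card * N := by
      intro S
      exact touch_sum_le D (fun X : Finset V => Metric.diam (X : Set V))
        (fun X => Metric.diam_nonneg) Φ lam mu hmu hfin Y S
    have key := key_induction D Φ lam hlam N hN Y (Z ∪ Y) Finset.subset_union_right hbound
      δE hδE m hm m le_rfl Z Finset.subset_union_left Q
    refine key.trans ?_
    have hmR : (0:ℝ) < (m : ℝ) := by exact_mod_cast hm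
    have hmm : lam * (m : ℝ) / (m : ℝ) * (Z.card : ℝ) = lam * Z.card := by
      field_simp
    rw [hmm]
    have hRsplit : (2 * N * (m : ℝ) / (Real.exp 1 * lam)) ^ m
        = (2 * N / lam) ^ m * ((m : ℝ) / Real.exp 1) ^ m := by
      rw [← mul_pow]
      congr 1
      rw [div_mul_div_comm, mul_comm lam (Real.exp 1)]
    rw [hRsplit]
    have hfact := pow_div_exp_le_factorial m
    calc ‖Q‖ * ((2 * N / lam) ^ m * ((m : ℝ) / Real.exp 1) ^ m) * Real.exp (lam * Z.card)
        = ((2 * N / lam) ^ m * ‖Q‖ * Real.exp (lam * Z.card)) * ((m : ℝ) / Real.exp 1) ^ m := by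
          ring
      _ ≤ ((2 * N / lam) ^ m * ‖Q‖ * Real.exp (lam * Z.card)) * (m.factorial : ℝ) := by
          apply mul_le_mul_of_nonneg_left hfact
          have h2N : (0:ℝ) ≤ 2 * N / lam := div_nonneg (by linarith) hlam.le
          positivity
      _ = (2 * N / lam) ^ m * ‖Q‖ * Real.exp (lam * Z.card) * (m.factorial : ℝ) := by ring
end
end

section
/- Let V = ℤ^g endowed with the distance induced by any ℓ^p norm (1 ≤ p ≤ ∞), let μ > 0, and let A and X be finite disjoint subsets of V. Then Σ_{v∈A} e^{−μ·dist(v,X)} ≤ ν · |∂A| · e^{−(μ/2)·dist(A,X)}, where ν := ( sup_{k∈ℕ} (2k+1)^g e^{−μk/2} ) · ( Σ_{j≥0} e^{−μj/2} ) is a constant depending only on μ and g. -/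
set_option linter.unusedVariables false
set_option linter.unusedSectionVars false

open scoped BigOperators ENNReal Matrix.Norms.L2Operator

noncomputable section


/-- The `ℓ^p` distance on `ℤ^g`, induced by the `ℓ^p` norm on `ℝ^g`. -/
def pdist (g : ℕ) (p : ℝ≥0∞) [Fact (1 ≤ p)] (x y : Fin g → ℤ) : ℝ :=
  dist ((WithLp.equiv p (Fin g → ℝ)).symm fun i => (x i : ℝ))
    ((WithLp.equiv p (Fin g → ℝ)).symm fun i => (y i : ℝ))

/-- The distance `dist(v,X) = inf_{u∈X} dist(v,u)` from a point to a set, valued in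
`[0,∞]` so that the distance to the empty set is `∞`. -/
def eSetDistP (g : ℕ) (p : ℝ≥0∞) [Fact (1 ≤ p)] (v : Fin g → ℤ)
    (X : Set (Fin g → ℤ)) : ℝ≥0∞ :=
  ⨅ u ∈ X, ENNReal.ofReal (pdist g p v u)

/-- The distance `dist(A,X) = inf_{v∈A} dist(v,X)` between two sets, valued in `[0,∞]`. -/
def eSetSetDistP (g : ℕ) (p : ℝ≥0∞) [Fact (1 ≤ p)] (A X : Set (Fin g → ℤ)) : ℝ≥0∞ :=
  ⨅ v ∈ A, eSetDistP g p v X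

open Classical in
/-- `e^{-μ t}` for `t ∈ [0,∞]`, with the convention `e^{-μ·∞} = 0`. -/
noncomputable def expNegMul (μ : ℝ) (t : ℝ≥0∞) : ℝ :=
  if t = ⊤ then 0 else Real.exp (-(μ * t.toReal))

open Classical in
/-- The inner `1`-boundary `∂A = {v ∈ A : dist(v, V∖A) ≤ 1}`. -/
noncomputable def pBdry (g : ℕ) (p : ℝ≥0∞) [Fact (1 ≤ p)]
    (A : Finset (Fin g → ℤ)) : Finset (Fin g → ℤ) :=
  A.filter fun v => eSetDistP g p v {u | u ∉ (A : Set (Fin g → ℤ))} ≤ 1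


-- ===== auxiliary lemmas =====
open Real Filter Topology

section AuxLemmas

variable (g : ℕ) (p : ℝ≥0∞) [Fact (1 ≤ p)]


lemma pdist_nonneg (x y : Fin g → ℤ) : 0 ≤ pdist g p x y := dist_nonneg

lemma coord_le_pdist (x y : Fin g → ℤ) (i : Fin g) :
    |(x i : ℝ) - (y i : ℝ)| ≤ pdist g p x y := by
  have h1 := (PiLp.lipschitzWith_ofLp p (fun _ : Fin g => ℝ)).dist_le_mul
    ((WithLp.equiv p (Fin g → ℝ)).symm fun i => (x i : ℝ))
    ((WithLp.equiv p (Fin g → ℝ)).symm fun i => (y i : ℝ))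
  simp only [WithLp.equiv_symm_apply, WithLp.ofLp_toLp, NNReal.coe_one, one_mul] at h1
  have h2 := dist_le_pi_dist (fun i => (x i : ℝ)) (fun i => (y i : ℝ)) i
  rw [Real.dist_eq] at h2
  exact h2.trans h1

lemma natAbs_le_pdist (x y : Fin g → ℤ) (i : Fin g) :
    (((x i - y i).natAbs : ℝ)) ≤ pdist g p x y := by
  have := coord_le_pdist g p x y i
  rw [Nat.cast_natAbs]
  push_cast
  exact this

lemma pdist_update (w : Fin g → ℤ) (i : Fin g) (ε : ℤ) :
    pdist g p w (Function.update w i (w i + ε)) = |(ε : ℝ)| := by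
  unfold pdist
  rw [dist_eq_norm, WithLp.equiv_symm_apply, ← WithLp.toLp_sub]
  have : ((fun j => (w j : ℝ)) - fun j => ((Function.update w i (w i + ε) j : ℤ) : ℝ))
      = Pi.single i (-(ε:ℝ)) := by
    funext j
    by_cases hj : j = i
    · subst hj; simp [Function.update_self]
    · simp [Function.update_of_ne hj, Pi.single_eq_of_ne hj]
  rw [this, PiLp.norm_toLp_single]
  simp


lemma exists_boundary_path (g : ℕ) (A : Finset (Fin g → ℤ)) :
    ∀ n (u v : Fin g → ℤ), v ∈ A → u ∉ A → (∑ i, (v i - u i).natAbs) ≤ n →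
    ∃ w i ε, w ∈ A ∧ (ε : ℤ).natAbs = 1 ∧ Function.update w i (w i + ε) ∉ A ∧
      ∀ j, (v j - w j).natAbs ≤ (v j - u j).natAbs := by
  intro n
  induction n with
  | zero =>
    intro u v hv hu hsum
    exfalso
    apply hu
    have : v = u := by
      funext j
      have := Finset.sum_eq_zero_iff.mp (Nat.le_zero.mp hsum) j (Finset.mem_univ j)
      omega
    rwa [← this]
  | succ n ih =>
    intro u v hv hu hsum
    by_cases hvu : v = u
    · exact absurd (hvu ▸ hv) hu
    · have hex : ∃ i, v i ≠ u i := by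
        by_contra h
        push_neg at h
        exact hvu (funext h)
      obtain ⟨i, hi⟩ := hex
      set ε : ℤ := if u i < v i then 1 else -1 with hε
      set u' := Function.update u i (u i + ε) with hu'
      have hterm : (v i - u' i).natAbs + 1 = (v i - u i).natAbs := by
        have : u' i = u i + ε := by rw [hu', Function.update_self]
        rw [this, hε]
        rcases lt_trichotomy (u i) (v i) with h | h | h
        · rw [if_pos h]; omega
        · exact absurd h hi.symm
        · rw [if_neg (by omega)]; omega
      have hoff : ∀ j, j ≠ i → u' j = u j := fun j hj => Function.update_of_ne hj _ _
      have hcoord : ∀ j, (v j - u' j).natAbs ≤ (v j - u j).natAbs := by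
        intro j
        by_cases hj : j = i
        · subst hj; omega
        · rw [hoff j hj]
      have hsum' : ∑ j, (v j - u' j).natAbs + 1 = ∑ j, (v j - u j).natAbs := by
        rw [← Finset.sum_erase_add _ _ (Finset.mem_univ i),
            ← Finset.sum_erase_add _ _ (Finset.mem_univ i)]
        have h1 : ∑ j ∈ Finset.univ.erase i, (v j - u' j).natAbs
            = ∑ j ∈ Finset.univ.erase i, (v j - u j).natAbs :=
          Finset.sum_congr rfl fun j hj => by rw [hoff j (Finset.mem_erase.mp hj).1]
        omega
      by_cases hu'A : u' ∈ A
      · refine ⟨u', i, -ε, hu'A, by rw [hε]; split <;> simp, ?_, hcoord⟩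
        have : Function.update u' i (u' i + -ε) = u := by
          funext j
          by_cases hj : j = i
          · subst hj
            rw [Function.update_self, hu', Function.update_self]; ring
          · rw [Function.update_of_ne hj, hoff j hj]
        rwa [this]
      · obtain ⟨w, i', ε', hw, hε', hwb, hcw⟩ := ih u' v hv hu'A (by omega)
        exact ⟨w, i', ε', hw, hε', hwb, fun j => (hcw j).trans (hcoord j)⟩


lemma term_le (g : ℕ) (μ : ℝ) (hμ : 0 < μ) (k : ℕ) :
    (2*(k:ℝ)+1)^g * Real.exp (-(μ * k / 2)) ≤ (4*g/μ + 1)^g := by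
  rcases Nat.eq_zero_or_pos g with hg | hg
  · subst hg; simp [Real.exp_le_one_iff]
    positivity
  · have hc : (0:ℝ) < μ / (2*g) := by positivity
    have h1 : (2*(k:ℝ)+1) ≤ (4*g/μ + 1) * Real.exp (μ/(2*g) * k) := by
      have he := Real.add_one_le_exp (μ/(2*g) * k)
      have he1 : (1:ℝ) ≤ Real.exp (μ/(2*g) * k) := by
        rw [Real.one_le_exp_iff]; positivity
      have hgk : (0:ℝ) ≤ (k:ℝ) := Nat.cast_nonneg k
      have h4 : (0:ℝ) < 4*g/μ := by positivity
      have hkey : 4*(g:ℝ)/μ * (μ/(2*g)) = 2 := by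
        field_simp
        ring
      nlinarith [mul_le_mul_of_nonneg_left he h4.le]
    have h2 : (2*(k:ℝ)+1)^g ≤ ((4*g/μ + 1) * Real.exp (μ/(2*g) * k))^g :=
      pow_le_pow_left₀ (by positivity) h1 g
    have h3 : (Real.exp (μ/(2*g) * k))^g = Real.exp (μ * k / 2) := by
      rw [← Real.exp_nat_mul]
      congr 1
      field_simp
    rw [mul_pow, h3] at h2
    calc (2*(k:ℝ)+1)^g * Real.exp (-(μ * k / 2))
        ≤ ((4*g/μ + 1)^g * Real.exp (μ * k / 2)) * Real.exp (-(μ * k / 2)) := by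
          apply mul_le_mul_of_nonneg_right h2 (Real.exp_nonneg _)
      _ = (4*g/μ + 1)^g := by rw [mul_assoc, ← Real.exp_add]; simp

lemma key (g : ℕ) (μ : ℝ) (hμ : 0 < μ) (D : ℝ) (hD : 1 ≤ D) {α : Type*}
    (Φ : Finset α) (k : α → ℕ)
    (hcount : ∀ j : ℕ, (((Φ.filter fun v => k v ≤ j).card : ℝ)) ≤ (2*(j:ℝ)+1)^g) :
    ∑ v ∈ Φ, Real.exp (-(μ * (max ((k v : ℝ)) D - D/2))) ≤
      (⨆ m : ℕ, (2*(m:ℝ)+1)^g * Real.exp (-(μ * m / 2))) *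
        ∑' j : ℕ, Real.exp (-(μ * j / 2)) := by
  classical
  set q : ℝ := Real.exp (-(μ/2)) with hqdef
  have hq0 : 0 < q := Real.exp_pos _
  have hq1 : q < 1 := by
    rw [hqdef, Real.exp_lt_one_iff]; linarith
  have h1q : (1:ℝ) - q ≠ 0 := by linarith
  set S : ℝ := ⨆ m : ℕ, (2*(m:ℝ)+1)^g * Real.exp (-(μ * m / 2)) with hSdef
  have hbdd : BddAbove (Set.range fun m : ℕ => (2*(m:ℝ)+1)^g * Real.exp (-(μ * m / 2))) := by
    refine ⟨(4*g/μ + 1)^g, ?_⟩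
    rintro x ⟨m, rfl⟩
    exact term_le g μ hμ m
  have hS : ∀ m : ℕ, (2*(m:ℝ)+1)^g * Real.exp (-(μ * m / 2)) ≤ S :=
    fun m => le_ciSup hbdd m
  have hS1 : (1:ℝ) ≤ S := by
    have := hS 0
    simpa using this
  have hS0 : (0:ℝ) ≤ S := by linarith
  have hgeom : ∀ j : ℕ, Real.exp (-(μ * j / 2)) = q ^ j := by
    intro j
    rw [hqdef, ← Real.exp_nat_mul]
    congr 1; ring
  have hTsummable : Summable (fun j : ℕ => Real.exp (-(μ * j / 2))) := by
    simp_rw [hgeom]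
    exact summable_geometric_of_lt_one hq0.le hq1
  set T : ℝ := ∑' j : ℕ, Real.exp (-(μ * j / 2)) with hTdef
  have hT1q : 1 + q ≤ T := by
    have h2 : ∑ j ∈ Finset.range 2, Real.exp (-(μ * j / 2)) ≤ T :=
      Summable.sum_le_tsum _ (fun j _ => (Real.exp_pos _).le) hTsummable
    have : ∑ j ∈ Finset.range 2, Real.exp (-(μ * j / 2)) = 1 + q := by
      rw [Finset.sum_range_succ, Finset.sum_range_one]
      rw [hqdef]
      norm_num
    linarith
  -- the ceiling
  set n₀ : ℕ := ⌈D⌉₊ with hn₀def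
  have hn₀1 : 1 ≤ n₀ := Nat.one_le_ceil_iff.mpr (by linarith)
  have hDn₀ : D ≤ (n₀:ℝ) := Nat.le_ceil D
  have hn₀D : (n₀:ℝ) - 1 ≤ D := by
    have := Nat.ceil_lt_add_one (le_of_lt (lt_of_lt_of_le zero_lt_one hD))
    rw [← hn₀def] at this
    linarith
  set F : ℕ → ℝ := fun m => Real.exp (-(μ * (max (m:ℝ) D - D/2))) with hFdef
  have hFpos : ∀ m, 0 < F m := fun m => Real.exp_pos _
  have hFanti : ∀ m, F (m+1) ≤ F m := by
    intro m
    apply Real.exp_le_exp.mpr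
    have h : max (m:ℝ) D ≤ max ((m:ℝ)+1) D := max_le_max (by linarith) le_rfl
    have h2 : ((m+1:ℕ):ℝ) = (m:ℝ)+1 := by push_cast; ring
    rw [h2]
    nlinarith [mul_le_mul_of_nonneg_left h hμ.le]
  set δ : ℕ → ℝ := fun j => F j - F (j+1) with hδdef
  have hδ0 : ∀ j, 0 ≤ δ j := fun j => sub_nonneg.mpr (hFanti j)
  set ψ : ℕ → ℝ := fun j => Real.exp (μ*j/2) * δ j with hψdef
  have hψ0 : ∀ j, 0 ≤ ψ j := fun j => mul_nonneg (Real.exp_nonneg _) (hδ0 j)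
  have hδψ : ∀ j, δ j ≤ ψ j := by
    intro j
    have h1 : (1:ℝ) ≤ Real.exp (μ*j/2) := by
      rw [Real.one_le_exp_iff]; positivity
    have h2 : (1:ℝ) * δ j ≤ Real.exp (μ*j/2) * δ j := mul_le_mul_of_nonneg_right h1 (hδ0 j)
    rw [one_mul] at h2
    exact h2.trans_eq rfl
  set a : ℝ := Real.exp (-(μ * (D - ((n₀:ℝ) - 1)) / 2)) with hadef
  set b : ℝ := Real.exp (-(μ * ((n₀:ℝ) - D) / 2)) with hbdef
  have hab : a * b = q := by
    rw [hadef, hbdef, hqdef, ← Real.exp_add]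
    congr 1; ring
  have ha1 : a ≤ 1 := by
    rw [hadef, Real.exp_le_one_iff]
    nlinarith
  have hb1 : b ≤ 1 := by
    rw [hbdef, Real.exp_le_one_iff]
    nlinarith
  -- ψ vanishes below n₀ - 1
  have hψzero : ∀ j, j + 1 < n₀ → ψ j = 0 := by
    intro j hj
    have hj1 : (j:ℝ) + 1 ≤ (n₀:ℝ) - 1 := by
      have : (j:ℝ) + 2 ≤ (n₀:ℝ) := by exact_mod_cast hj
      linarith
    have h1 : max ((j:ℝ)) D = D := max_eq_right (by linarith)
    have h2 : max (((j+1:ℕ)):ℝ) D = D := max_eq_right (by push_cast; linarith)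
    rw [hψdef]
    simp only
    rw [hδdef]
    simp only
    rw [hFdef]
    simp only [h1]
    rw [h2]
    simp
  -- ψ at the transition
  have hcast : ((n₀ - 1 : ℕ) : ℝ) = (n₀:ℝ) - 1 := by
    push_cast [Nat.cast_sub hn₀1]
    ring
  have hsucc : (n₀ - 1) + 1 = n₀ := Nat.succ_pred_eq_of_pos hn₀1
  have hψtrans : ψ (n₀ - 1) = a - q * b := by
    rw [hψdef]
    simp only
    rw [hδdef]
    simp only
    rw [hsucc, hFdef]
    simp only
    rw [hcast]
    rw [max_eq_right (by linarith : (n₀:ℝ) - 1 ≤ D), max_eq_left hDn₀]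
    rw [mul_sub, ← Real.exp_add, ← Real.exp_add]
    rw [hadef, hqdef, hbdef, ← Real.exp_add]
    congr 1 <;> ring
  -- ψ tail
  have hψtail : ∀ i : ℕ, ψ (i + n₀) = ((1 - Real.exp (-μ)) * b) * q ^ i := by
    intro i
    have hin : D ≤ ((i + n₀ : ℕ):ℝ) := by
      push_cast
      have : (0:ℝ) ≤ (i:ℝ) := Nat.cast_nonneg i
      linarith
    have hin1 : D ≤ ((i + n₀ : ℕ):ℝ) + 1 := by linarith
    rw [hψdef]
    simp only
    rw [hδdef]
    simp only
    rw [hFdef]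
    simp only
    have hmax1 : max (((i+n₀:ℕ)):ℝ) D = ((i+n₀:ℕ):ℝ) := max_eq_left hin
    have hmax2 : max (((i+n₀+1:ℕ)):ℝ) D = ((i+n₀:ℕ):ℝ) + 1 := by
      rw [max_eq_left (by push_cast; linarith)]
      push_cast
      ring
    have hqi : q ^ i = Real.exp ((i:ℝ) * -(μ/2)) := by
      rw [hqdef, ← Real.exp_nat_mul]
    rw [hmax1, hmax2]
    have e1 : Real.exp (μ*((i+n₀:ℕ):ℝ)/2) * Real.exp (-(μ * (((i+n₀:ℕ):ℝ) - D/2)))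
        = b * q ^ i := by
      rw [hbdef, hqi, ← Real.exp_add, ← Real.exp_add]
      congr 1
      push_cast
      ring
    have e2 : Real.exp (μ*((i+n₀:ℕ):ℝ)/2) * Real.exp (-(μ * (((i+n₀:ℕ):ℝ) + 1 - D/2)))
        = Real.exp (-μ) * (b * q ^ i) := by
      rw [hbdef, hqi, ← Real.exp_add, ← Real.exp_add, ← Real.exp_add]
      congr 1
      push_cast
      ring
    rw [mul_sub, e1, e2]
    ring
  have hψtailsummable : Summable (fun i => ψ (i + n₀)) := by
    simp_rw [hψtail]
    exact (summable_geometric_of_lt_one hq0.le hq1).mul_left _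
  have hψS : Summable ψ := (summable_nat_add_iff n₀).mp hψtailsummable
  have hψsum : ∑' j, ψ j = a + b := by
    rw [← Summable.sum_add_tsum_nat_add n₀ hψS]
    have hhead : ∑ i ∈ Finset.range n₀, ψ i = a - q * b := by
      have h0 : ∀ j ∈ Finset.range (n₀ - 1), ψ j = 0 := fun j hj =>
        hψzero j (by have := Finset.mem_range.mp hj; omega)
      calc ∑ i ∈ Finset.range n₀, ψ i
          = ∑ i ∈ Finset.range ((n₀-1)+1), ψ i := by rw [hsucc]
        _ = ∑ i ∈ Finset.range (n₀-1), ψ i + ψ (n₀-1) := Finset.sum_range_succ _ _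
        _ = 0 + ψ (n₀-1) := by rw [Finset.sum_eq_zero h0]
        _ = a - q*b := by rw [zero_add, hψtrans]
    have htail : ∑' i, ψ (i + n₀) = (1 + q) * b := by
      rw [tsum_congr hψtail, tsum_mul_left, tsum_geometric_of_lt_one hq0.le hq1]
      have hqq : Real.exp (-μ) = q * q := by
        rw [hqdef, ← Real.exp_add]; congr 1; ring
      rw [hqq]
      field_simp
      ring
    rw [hhead, htail]
    ring
  have hψle : ∑' j, ψ j ≤ 1 + q := by
    rw [hψsum]
    nlinarith
  -- summability of δ
  have hδS : Summable δ := Summable.of_nonneg_of_le hδ0 hδψ hψS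
  -- the layer-cake representation
  have hF0 : Tendsto F atTop (𝓝 0) := by
    apply squeeze_zero (fun n => (hFpos n).le)
      (g := fun n : ℕ => Real.exp (μ*D/2) * (Real.exp (-μ))^n)
    · intro n
      rw [hFdef]
      simp only
      rw [← Real.exp_nat_mul, ← Real.exp_add]
      apply Real.exp_le_exp.mpr
      have : (n:ℝ) ≤ max (n:ℝ) D := le_max_left _ _
      nlinarith
    · have := tendsto_pow_atTop_nhds_zero_of_lt_one (Real.exp_nonneg (-μ))
        (Real.exp_lt_one_iff.mpr (by linarith))
      simpa using this.const_mul (Real.exp (μ*D/2))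
  have hlayer : ∀ m : ℕ, F m = ∑' j, (if m ≤ j then δ j else 0) := by
    intro m
    have hsm : Summable (fun j => if m ≤ j then δ j else 0) :=
      Summable.of_nonneg_of_le (fun j => by split; exacts [hδ0 j, le_rfl])
        (fun j => by split; exacts [le_rfl, hδ0 j]) hδS
    rw [← Summable.sum_add_tsum_nat_add m hsm]
    have h0 : ∑ i ∈ Finset.range m, (if m ≤ i then δ i else 0) = 0 := by
      apply Finset.sum_eq_zero
      intro i hi
      rw [if_neg]
      have := Finset.mem_range.mp hi
      omega
    rw [h0, zero_add]
    have hite : ∀ i : ℕ, (if m ≤ i + m then δ (i + m) else 0) = δ (i + m) := by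
      intro i; rw [if_pos (Nat.le_add_left m i)]
    rw [tsum_congr hite]
    -- telescoping
    have hδm : Summable (fun i => δ (i + m)) := (summable_nat_add_iff m).mpr hδS
    have hpart : ∀ n : ℕ, ∑ i ∈ Finset.range n, δ (i + m) = F m - F (n + m) := by
      intro n
      have h := Finset.sum_range_sub' (fun i => F (i + m)) n
      simp only [Nat.zero_add] at h
      rw [← h]
      apply Finset.sum_congr rfl
      intro i _
      show F (i+m) - F ((i+m)+1) = F (i+m) - F ((i+1)+m)
      congr 2
      omega
    have htend1 : Filter.Tendsto (fun n : ℕ => ∑ i ∈ Finset.range n, δ (i + m)) atTop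
        (𝓝 (∑' i, δ (i + m))) := hδm.hasSum.tendsto_sum_nat
    have htend2 : Filter.Tendsto (fun n : ℕ => ∑ i ∈ Finset.range n, δ (i + m)) atTop
        (𝓝 (F m)) := by
      simp_rw [hpart]
      have hcomp : Filter.Tendsto (fun n : ℕ => F (n + m)) atTop (𝓝 0) :=
        hF0.comp (tendsto_add_atTop_nat m)
      have h2 := ((tendsto_const_nhds : Filter.Tendsto (fun _ : ℕ => F m) atTop
        (𝓝 (F m))).sub hcomp)
      simpa using h2
    exact (tendsto_nhds_unique htend1 htend2).symm
  -- main chain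
  have hccore : ∀ j : ℕ, ∑ v ∈ Φ, (if k v ≤ j then δ j else 0) ≤ S * ψ j := by
    intro j
    have hcard : ∑ v ∈ Φ, (if k v ≤ j then δ j else 0)
        = ((Φ.filter fun v => k v ≤ j).card : ℝ) * δ j := by
      rw [← Finset.sum_filter, Finset.sum_const, nsmul_eq_mul]
    have h2 : (2*(j:ℝ)+1)^g ≤ S * Real.exp (μ * j / 2) := by
      have h3 := mul_le_mul_of_nonneg_right (hS j) (Real.exp_nonneg (μ * j / 2))
      rw [mul_assoc, ← Real.exp_add, neg_add_cancel, Real.exp_zero, mul_one] at h3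
      exact h3
    have hψj : S * ψ j = S * Real.exp (μ * j / 2) * δ j := by
      rw [hψdef]; simp only; ring
    rw [hcard, hψj]
    exact (mul_le_mul_of_nonneg_right (hcount j) (hδ0 j)).trans
      (mul_le_mul_of_nonneg_right h2 (hδ0 j))
  have hnn : ∀ j : ℕ, 0 ≤ ∑ v ∈ Φ, (if k v ≤ j then δ j else 0) :=
    fun j => Finset.sum_nonneg fun v _ => by split; exacts [hδ0 j, le_rfl]
  have hsum1 : Summable (fun j : ℕ => ∑ v ∈ Φ, (if k v ≤ j then δ j else 0)) :=
    Summable.of_nonneg_of_le hnn hccore (hψS.mul_left S)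
  calc ∑ v ∈ Φ, F (k v)
      = ∑ v ∈ Φ, ∑' j, (if k v ≤ j then δ j else 0) := by
        apply Finset.sum_congr rfl
        intro v _
        exact hlayer (k v)
    _ = ∑' j, ∑ v ∈ Φ, (if k v ≤ j then δ j else 0) := by
        refine (Summable.tsum_finsetSum ?_).symm
        intro v _
        exact Summable.of_nonneg_of_le (fun j => by split; exacts [hδ0 j, le_rfl])
          (fun j => by split; exacts [le_rfl, hδ0 j]) hδS
    _ ≤ ∑' j, S * ψ j := Summable.tsum_le_tsum hccore hsum1 (hψS.mul_left S)
    _ = S * ∑' j, ψ j := by rw [tsum_mul_left]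
    _ ≤ S * (1 + q) := mul_le_mul_of_nonneg_left hψle hS0
    _ ≤ S * T := mul_le_mul_of_nonneg_left hT1q hS0


lemma expNegMul_nonneg (μ : ℝ) (t : ℝ≥0∞) : 0 ≤ expNegMul μ t := by
  unfold expNegMul
  split
  · exact le_rfl
  · exact (Real.exp_pos _).le

lemma expNegMul_ofReal (μ d : ℝ) (hd : 0 ≤ d) :
    expNegMul μ (ENNReal.ofReal d) = Real.exp (-(μ * d)) := by
  unfold expNegMul
  rw [if_neg ENNReal.ofReal_ne_top, ENNReal.toReal_ofReal hd]

lemma eSetDistP_eq_min (v : Fin g → ℤ) (X : Finset (Fin g → ℤ)) (u : Fin g → ℤ)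
    (hu : u ∈ X) (hmin : ∀ u' ∈ X, pdist g p v u ≤ pdist g p v u') :
    eSetDistP g p v (X : Set (Fin g → ℤ)) = ENNReal.ofReal (pdist g p v u) := by
  apply le_antisymm
  · exact iInf₂_le u (Finset.mem_coe.mpr hu)
  · exact le_iInf₂ fun u' hu' => ENNReal.ofReal_le_ofReal (hmin u' (Finset.mem_coe.mp hu'))

end AuxLemmas

/-- (Remark 2.4.) Let `V = ℤ^g` with the distance induced by any `ℓ^p`
norm (`1 ≤ p ≤ ∞`), `μ > 0`, and `A, X` finite disjoint subsets of `V`. Then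
`∑_{v∈A} e^{-μ dist(v,X)} ≤ ν |∂A| e^{-(μ/2) dist(A,X)}`, where
`ν = (sup_{k∈ℕ} (2k+1)^g e^{-μk/2}) · (∑_{j≥0} e^{-μj/2})`. -/
theorem boundary_sum_bound (g : ℕ) (p : ℝ≥0∞) [Fact (1 ≤ p)] (μ : ℝ) (hμ : 0 < μ)
    (A X : Finset (Fin g → ℤ)) (hAX : Disjoint A X) :
    ∑ v ∈ A, expNegMul μ (eSetDistP g p v (X : Set (Fin g → ℤ))) ≤
      ((⨆ k : ℕ, (2 * (k : ℝ) + 1) ^ g * Real.exp (-(μ * k / 2))) *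
          ∑' j : ℕ, Real.exp (-(μ * j / 2))) *
        ((pBdry g p A).card : ℝ) *
        expNegMul (μ / 2)
          (eSetSetDistP g p (A : Set (Fin g → ℤ)) (X : Set (Fin g → ℤ))) := by
  classical
  -- nonnegativity of the constant
  have hbddS : BddAbove (Set.range fun m : ℕ => (2*(m:ℝ)+1)^g * Real.exp (-(μ * m / 2))) := by
    refine ⟨(4*g/μ + 1)^g, ?_⟩
    rintro x ⟨m, rfl⟩
    exact term_le g μ hμ m
  have hS1 : (1:ℝ) ≤ ⨆ k : ℕ, (2 * (k : ℝ) + 1) ^ g * Real.exp (-(μ * k / 2)) := by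
    have h := le_ciSup hbddS 0
    simpa using h
  have hS0 : (0:ℝ) ≤ ⨆ k : ℕ, (2 * (k : ℝ) + 1) ^ g * Real.exp (-(μ * k / 2)) := by linarith
  have hT0 : (0:ℝ) ≤ ∑' j : ℕ, Real.exp (-(μ * j / 2)) :=
    tsum_nonneg fun j => (Real.exp_pos _).le
  have hRHS0 : (0:ℝ) ≤ ((⨆ k : ℕ, (2 * (k : ℝ) + 1) ^ g * Real.exp (-(μ * k / 2))) *
      ∑' j : ℕ, Real.exp (-(μ * j / 2))) * ((pBdry g p A).card : ℝ) *
      expNegMul (μ / 2) (eSetSetDistP g p (A : Set (Fin g → ℤ)) (X : Set (Fin g → ℤ))) :=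
    mul_nonneg (mul_nonneg (mul_nonneg hS0 hT0) (Nat.cast_nonneg _)) (expNegMul_nonneg _ _)
  rcases X.eq_empty_or_nonempty with hXe | hXne
  · subst hXe
    have : ∀ v ∈ A, expNegMul μ (eSetDistP g p v ((∅ : Finset (Fin g → ℤ)) : Set (Fin g → ℤ)))
        = 0 := by
      intro v _
      have he : eSetDistP g p v ((∅ : Finset (Fin g → ℤ)) : Set (Fin g → ℤ)) = ⊤ := by
        unfold eSetDistP
        simp
      rw [he]
      unfold expNegMul
      simp
    rw [Finset.sum_eq_zero this]
    exact hRHS0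
  rcases A.eq_empty_or_nonempty with hAe | hAne
  · subst hAe
    simpa using hRHS0
  -- the global minimizing pair
  obtain ⟨z₀, hz₀, hz₀min⟩ := Finset.exists_min_image (A ×ˢ X)
    (fun z => pdist g p z.1 z.2) (hAne.product hXne)
  obtain ⟨hv₀, hu₀⟩ := Finset.mem_product.mp hz₀
  set v₀ := z₀.1
  set u₀ := z₀.2
  set D : ℝ := pdist g p v₀ u₀ with hDdef
  have hDmin : ∀ v ∈ A, ∀ u ∈ X, D ≤ pdist g p v u := fun v hv u hu =>
    hz₀min (v, u) (Finset.mem_product.mpr ⟨hv, hu⟩)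
  have hD1 : (1:ℝ) ≤ D := by
    have hne : v₀ ≠ u₀ := by
      intro h
      exact (Finset.disjoint_left.mp hAX hv₀) (h ▸ hu₀)
    have hex : ∃ i, v₀ i ≠ u₀ i := by
      by_contra h
      push_neg at h
      exact hne (funext h)
    obtain ⟨i, hi⟩ := hex
    have h1 : (1:ℝ) ≤ ((v₀ i - u₀ i).natAbs : ℝ) := by
      have : 1 ≤ (v₀ i - u₀ i).natAbs := by omega
      exact_mod_cast this
    exact h1.trans (natAbs_le_pdist g p v₀ u₀ i)
  have hD0 : (0:ℝ) ≤ D := by linarith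
  -- the set-set distance
  have hDset : eSetSetDistP g p (A : Set (Fin g → ℤ)) (X : Set (Fin g → ℤ))
      = ENNReal.ofReal D := by
    apply le_antisymm
    · calc eSetSetDistP g p (A : Set (Fin g → ℤ)) (X : Set (Fin g → ℤ))
          ≤ eSetDistP g p v₀ (X : Set (Fin g → ℤ)) := iInf₂_le v₀ (Finset.mem_coe.mpr hv₀)
        _ ≤ ENNReal.ofReal D := iInf₂_le u₀ (Finset.mem_coe.mpr hu₀)
    · refine le_iInf₂ fun v hv => le_iInf₂ fun u hu => ?_
      exact ENNReal.ofReal_le_ofReal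
        (hDmin v (Finset.mem_coe.mp hv) u (Finset.mem_coe.mp hu))
  -- choose, for every v in A, a boundary point and a Chebyshev radius
  have Hch : ∀ v : Fin g → ℤ, ∃ (w : Fin g → ℤ) (kv : ℕ), v ∈ A →
      (w ∈ pBdry g p A ∧
        kv = Finset.univ.sup (fun j => (v j - w j).natAbs) ∧
        expNegMul μ (eSetDistP g p v (X : Set (Fin g → ℤ)))
          ≤ Real.exp (-(μ/2*D)) * Real.exp (-(μ * (max (kv:ℝ) D - D/2)))) := by
    intro v
    by_cases hv : v ∈ A
    swap
    · exact ⟨v, 0, fun h => absurd h hv⟩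
    obtain ⟨u, hu, humin⟩ := Finset.exists_min_image X (fun u => pdist g p v u) hXne
    have huA : u ∉ A := Finset.disjoint_right.mp hAX hu
    obtain ⟨w, i, ε, hwA, hε, hwout, hcoord⟩ :=
      exists_boundary_path g A (∑ i, (v i - u i).natAbs) u v hv huA le_rfl
    refine ⟨w, Finset.univ.sup (fun j => (v j - w j).natAbs), fun _ => ⟨?_, rfl, ?_⟩⟩
    · -- boundary membership
      unfold pBdry
      rw [Finset.mem_filter]
      refine ⟨hwA, ?_⟩
      have hmem : Function.update w i (w i + ε) ∈
          {u | u ∉ (A : Set (Fin g → ℤ))} := by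
        simpa using hwout
      have hle : eSetDistP g p w {u | u ∉ (A : Set (Fin g → ℤ))}
          ≤ ENNReal.ofReal (pdist g p w (Function.update w i (w i + ε))) :=
        iInf₂_le _ hmem
      rw [pdist_update] at hle
      have habs : |(ε:ℝ)| = 1 := by
        rcases Int.natAbs_eq_iff.mp hε with h | h <;> rw [h] <;> norm_num
      rw [habs, ENNReal.ofReal_one] at hle
      exact hle
    · -- the exponential bound
      have heq := eSetDistP_eq_min g p v X u hu humin
      set d : ℝ := pdist g p v u with hddef
      have hd0 : (0:ℝ) ≤ d := pdist_nonneg g p v u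
      rw [heq, expNegMul_ofReal μ d hd0]
      set kv : ℕ := Finset.univ.sup (fun j => (v j - w j).natAbs) with hkvdef
      have hkd : (kv:ℝ) ≤ d := by
        rcases (Finset.univ : Finset (Fin g)).eq_empty_or_nonempty with hge | hgne
        · rw [hkvdef, hge]
          simp [hd0]
        · obtain ⟨j₀, _, hj₀⟩ := Finset.exists_mem_eq_sup Finset.univ hgne
            (fun j => (v j - w j).natAbs)
          rw [hkvdef, hj₀]
          have h1 : (v j₀ - w j₀).natAbs ≤ (v j₀ - u j₀).natAbs := hcoord j₀
          have h2 : ((v j₀ - u j₀).natAbs : ℝ) ≤ d := natAbs_le_pdist g p v u j₀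
          have h3 : ((v j₀ - w j₀).natAbs : ℝ) ≤ ((v j₀ - u j₀).natAbs : ℝ) := by
            exact_mod_cast h1
          exact h3.trans h2
      have hdD : D ≤ d := hDmin v hv u hu
      rw [← Real.exp_add]
      apply Real.exp_le_exp.mpr
      have hmax : max (kv:ℝ) D ≤ d := max_le hkd hdD
      nlinarith [mul_le_mul_of_nonneg_left hmax hμ.le]
  choose wf kf hwk using Hch
  -- pointwise bound and fiberwise grouping
  have hstep1 : ∑ v ∈ A, expNegMul μ (eSetDistP g p v (X : Set (Fin g → ℤ)))
      ≤ Real.exp (-(μ/2*D)) *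
        ∑ v ∈ A, Real.exp (-(μ * (max ((kf v):ℝ) D - D/2))) := by
    rw [Finset.mul_sum]
    exact Finset.sum_le_sum fun v hv => (hwk v hv).2.2
  have hstep2 : ∑ v ∈ A, Real.exp (-(μ * (max ((kf v):ℝ) D - D/2)))
      ≤ ((pBdry g p A).card : ℝ) *
        ((⨆ k : ℕ, (2 * (k : ℝ) + 1) ^ g * Real.exp (-(μ * k / 2))) *
          ∑' j : ℕ, Real.exp (-(μ * j / 2))) := by
    rw [← Finset.sum_fiberwise_of_maps_to (fun v hv => (hwk v hv).1)
      (fun v => Real.exp (-(μ * (max ((kf v):ℝ) D - D/2))))]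
    have hinner : ∀ w' ∈ pBdry g p A,
        ∑ v ∈ A.filter (fun v => wf v = w'), Real.exp (-(μ * (max ((kf v):ℝ) D - D/2)))
          ≤ (⨆ k : ℕ, (2 * (k : ℝ) + 1) ^ g * Real.exp (-(μ * k / 2))) *
            ∑' j : ℕ, Real.exp (-(μ * j / 2)) := by
      intro w' _
      apply key g μ hμ D hD1
      intro j
      -- counting
      have hsubcount : ((A.filter (fun v => wf v = w')).filter (fun v => kf v ≤ j)).card
          ≤ (2*j+1)^g := by
        have hmaps : ∀ v ∈ (A.filter (fun v => wf v = w')).filter (fun v => kf v ≤ j),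
            (fun m => v m - w' m) ∈
              Fintype.piFinset (fun _ : Fin g => Finset.Icc (-(j:ℤ)) (j:ℤ)) := by
          intro v hv
          rw [Finset.mem_filter, Finset.mem_filter] at hv
          obtain ⟨⟨hvA, hvw⟩, hvk⟩ := hv
          rw [Fintype.mem_piFinset]
          intro m
          rw [Finset.mem_Icc]
          have h1 : (v m - wf v m).natAbs ≤ kf v := by
            have := (hwk v hvA).2.1
            rw [this]
            exact Finset.le_sup (f := fun j => (v j - wf v j).natAbs) (Finset.mem_univ m)
          rw [hvw] at h1
          omega
        have hinj : Set.InjOn (fun v (m : Fin g) => v m - w' m)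
            (((A.filter (fun v => wf v = w')).filter (fun v => kf v ≤ j)) :
              Set (Fin g → ℤ)) := by
          intro v1 _ v2 _ h
          funext m
          have := congrFun h m
          simp only at this
          omega
        have hcard := Finset.card_le_card_of_injOn _ hmaps hinj
        calc ((A.filter (fun v => wf v = w')).filter (fun v => kf v ≤ j)).card
            ≤ (Fintype.piFinset (fun _ : Fin g => Finset.Icc (-(j:ℤ)) (j:ℤ))).card := hcard
          _ = (2*j+1)^g := by
              rw [Fintype.card_piFinset]
              rw [Finset.prod_const]
              congr 1
              · rw [Int.card_Icc]
                simp [Finset.card_univ]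
                omega
              · simp [Finset.card_univ]
      have : (((A.filter (fun v => wf v = w')).filter (fun v => kf v ≤ j)).card : ℝ)
          ≤ ((2*j+1)^g : ℕ) := by exact_mod_cast hsubcount
      calc (((A.filter (fun v => wf v = w')).filter (fun v => kf v ≤ j)).card : ℝ)
          ≤ ((2*j+1)^g : ℕ) := this
        _ = (2*(j:ℝ)+1)^g := by push_cast; ring
    calc ∑ w' ∈ pBdry g p A, ∑ v ∈ A.filter (fun v => wf v = w'),
          Real.exp (-(μ * (max ((kf v):ℝ) D - D/2)))
        ≤ ∑ w' ∈ pBdry g p A,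
            ((⨆ k : ℕ, (2 * (k : ℝ) + 1) ^ g * Real.exp (-(μ * k / 2))) *
              ∑' j : ℕ, Real.exp (-(μ * j / 2))) := Finset.sum_le_sum hinner
      _ = ((pBdry g p A).card : ℝ) *
            ((⨆ k : ℕ, (2 * (k : ℝ) + 1) ^ g * Real.exp (-(μ * k / 2))) *
              ∑' j : ℕ, Real.exp (-(μ * j / 2))) := by
          rw [Finset.sum_const, nsmul_eq_mul]
  -- final assembly
  rw [hDset, expNegMul_ofReal (μ/2) D hD0]
  calc ∑ v ∈ A, expNegMul μ (eSetDistP g p v (X : Set (Fin g → ℤ)))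
      ≤ Real.exp (-(μ/2*D)) *
        ∑ v ∈ A, Real.exp (-(μ * (max ((kf v):ℝ) D - D/2))) := hstep1
    _ ≤ Real.exp (-(μ/2*D)) * (((pBdry g p A).card : ℝ) *
          ((⨆ k : ℕ, (2 * (k : ℝ) + 1) ^ g * Real.exp (-(μ * k / 2))) *
            ∑' j : ℕ, Real.exp (-(μ * j / 2)))) :=
        mul_le_mul_of_nonneg_left hstep2 (Real.exp_nonneg _)
    _ = ((⨆ k : ℕ, (2 * (k : ℝ) + 1) ^ g * Real.exp (-(μ * k / 2))) *
          ∑' j : ℕ, Real.exp (-(μ * j / 2))) * ((pBdry g p A).card : ℝ) *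
          Real.exp (-(μ / 2 * D)) := by ring
end
end
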